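/- arXiv:1901.01389 — 7 statements merged into one kernel-verified Lean document; each statement's English description precedes it below -/
import Mathlib

section
/- Let $S \in \mathbb{R}^{p\times p}$, $\Phi \in \mathbb{R}^{\nu\times\nu}$, $T \in \mathbb{R}^{\nu\times p}$, $\Gamma \in \mathbb{R}^{1\times p}$, $\Lambda \in \mathbb{R}^{1\times \nu}$ satisfy $TS = \Phi T$ and $\Gamma = \Lambda T$. Assume the pair $(\Gamma, S)$ is detectable. If $i\alpha$ (with $\alpha \in \mathbb{R}$) is an eigenvalue of $S$ of algebraic multiplicity $k$, then $i\alpha$ is an eigenvalue of $\Phi$ of algebraic multiplicity at least $k$. Consequently $\nu \ge p$ whenever all eigenvalues of $S$ lie on the imaginary axis. -/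
/-- Hautus-test detectability of a pair `(Γ, S)` of real matrices, considered
over the complexification. -/
def Detectable3 {n : Type*} [Fintype n] [DecidableEq n]
    (Γ : Matrix (Fin 1) n ℝ) (S : Matrix n n ℝ) : Prop :=
  ∀ lam : ℂ, 0 ≤ lam.re → ∀ v : n → ℂ,
    (S.map (Complex.ofReal)).mulVec v = lam • v →
    (Γ.map (Complex.ofReal)).mulVec v = 0 → v = 0


open Polynomial Matrix Module

section Aux
variable {n : Type*} [Fintype n] [DecidableEq n]

lemma aux_charpoly_sub_smul_one (M : Matrix n n ℂ) (μ : ℂ) :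
    (M - μ • 1).charpoly = M.charpoly.comp (X + C μ) := by
  have h : charmatrix (M - μ • (1 : Matrix n n ℂ))
      = ((eval₂RingHom Polynomial.C (X + C μ)).mapMatrix (charmatrix M)) := by
    ext i j
    by_cases hij : i = j
    · subst hij
      simp only [charmatrix_apply_eq, RingHom.mapMatrix_apply, Matrix.map_apply,
        Matrix.sub_apply, Matrix.smul_apply, Matrix.one_apply_eq, coe_eval₂RingHom,
        eval₂_sub, eval₂_X, eval₂_C, smul_eq_mul, mul_one, map_sub]
      ring_nf
    · simp only [charmatrix_apply_ne _ _ _ hij, RingHom.mapMatrix_apply, Matrix.map_apply,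
        Matrix.sub_apply, Matrix.smul_apply, Matrix.one_apply_ne hij, coe_eval₂RingHom,
        eval₂_neg, eval₂_C, smul_eq_mul, mul_zero, sub_zero]
  rw [Matrix.charpoly, h, ← RingHom.map_det, Matrix.charpoly]
  simp only [coe_eval₂RingHom]
  rfl

lemma aux_toLin'_sub_smul (M : Matrix n n ℂ) (μ : ℂ) :
    Matrix.toLin' M - μ • (1 : Module.End ℂ (n → ℂ)) = Matrix.toLin' (M - μ • 1) := by
  ext v
  simp [Matrix.toLin'_apply, Matrix.sub_mulVec, Matrix.smul_mulVec, Matrix.one_mulVec]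

lemma aux_rootMultiplicity (M : Matrix n n ℂ) (μ : ℂ) :
    M.charpoly.rootMultiplicity μ
      = Module.finrank ℂ (Module.End.maxGenEigenspace (Matrix.toLin' M) μ) := by
  have h1 : Module.End.maxGenEigenspace (Matrix.toLin' M) μ
      = Module.End.maxGenEigenspace (Matrix.toLin' (M - μ • 1)) 0 := by
    rw [← aux_toLin'_sub_smul]
    ext x
    simp only [Module.End.mem_maxGenEigenspace, zero_smul, sub_zero]
  have h2 : (Matrix.toLin' (M - μ • 1) : Module.End ℂ (n → ℂ)).charpoly
      = (M - μ • 1).charpoly := by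
    rw [← LinearMap.charpoly_toMatrix (Matrix.toLin' (M - μ • 1)) (Pi.basisFun ℂ n),
      LinearMap.toMatrix_eq_toMatrix', LinearMap.toMatrix'_toLin']
  rw [h1, LinearMap.finrank_maxGenEigenspace_zero_eq, h2, aux_charpoly_sub_smul_one,
    Polynomial.rootMultiplicity_eq_natTrailingDegree]

lemma aux_pow_mulVec (B : Matrix n n ℂ) (k : ℕ) (x : n → ℂ) :
    ((Matrix.toLin' B) ^ k) x = (B ^ k).mulVec x := by
  induction k generalizing x with
  | zero => simp [Matrix.one_mulVec]
  | succ k ih =>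
      rw [pow_succ, pow_succ, Module.End.mul_apply, Matrix.toLin'_apply, ih,
        Matrix.mulVec_mulVec]

lemma aux_mem_maxGen (M : Matrix n n ℂ) (μ : ℂ) (x : n → ℂ) :
    x ∈ Module.End.maxGenEigenspace (Matrix.toLin' M) μ
      ↔ ∃ k : ℕ, ((M - μ • 1) ^ k).mulVec x = 0 := by
  rw [Module.End.mem_maxGenEigenspace]
  refine exists_congr fun k => ?_
  rw [aux_toLin'_sub_smul, aux_pow_mulVec]

lemma aux_root_mem_spectrum (M : Matrix n n ℂ) {μ : ℂ} (h : M.charpoly.IsRoot μ) :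
    μ ∈ spectrum ℂ M := by
  have hpos : 0 < M.charpoly.rootMultiplicity μ :=
    (Polynomial.rootMultiplicity_pos (M.charpoly_monic.ne_zero)).mpr h
  rw [aux_rootMultiplicity] at hpos
  have hne : Module.End.maxGenEigenspace (Matrix.toLin' M) μ ≠ ⊥ := by
    intro hb
    rw [hb] at hpos
    simp at hpos
  have h1 : Module.End.HasUnifEigenvalue (Matrix.toLin' M) μ 1 :=
    Module.End.HasUnifEigenvalue.lt zero_lt_one (hne : Module.End.HasUnifEigenvalue _ μ ⊤)
  have h2 := h1.mem_spectrum
  have h3 : Matrix.toLin' M = Matrix.toLinAlgEquiv' M := by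
    ext v
    simp [Matrix.toLin'_apply, Matrix.toLinAlgEquiv'_apply]
  rw [h3] at h2
  rwa [AlgEquiv.spectrum_eq Matrix.toLinAlgEquiv' M] at h2

end Aux

lemma aux_map_mul_ofReal {l m n : Type*} [Fintype l] [Fintype m] [Fintype n]
    (A : Matrix l m ℝ) (B : Matrix m n ℝ) :
    (A * B).map (Complex.ofReal) = A.map (Complex.ofReal) * B.map (Complex.ofReal) := by
  ext i j
  simp only [Matrix.mul_apply, Matrix.map_apply]
  push_cast
  rfl

lemma aux_finrank_le (p ν : ℕ)
    (S : Matrix (Fin p) (Fin p) ℝ) (Φ : Matrix (Fin ν) (Fin ν) ℝ)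
    (T : Matrix (Fin ν) (Fin p) ℝ)
    (Γ : Matrix (Fin 1) (Fin p) ℝ) (Λ : Matrix (Fin 1) (Fin ν) ℝ)
    (hTS : T * S = Φ * T) (hΓ : Γ = Λ * T)
    (hdet : Detectable3 Γ S) (μ : ℂ) (hre : 0 ≤ μ.re) :
    Module.finrank ℂ
        (Module.End.maxGenEigenspace (Matrix.toLin' (S.map (Complex.ofReal))) μ)
      ≤ Module.finrank ℂ
        (Module.End.maxGenEigenspace (Matrix.toLin' (Φ.map (Complex.ofReal))) μ) := by
  set Sc := S.map (Complex.ofReal) with hSc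
  set Φc := Φ.map (Complex.ofReal) with hΦc
  set Tc := T.map (Complex.ofReal) with hTc
  set Λc := Λ.map (Complex.ofReal) with hΛc
  set Γc := Γ.map (Complex.ofReal) with hΓc
  have hTSc : Tc * Sc = Φc * Tc := by
    rw [hTc, hSc, hΦc, ← aux_map_mul_ofReal, ← aux_map_mul_ofReal, hTS]
  have hΓTc : Γc = Λc * Tc := by
    rw [hΓc, hΛc, hTc, ← aux_map_mul_ofReal, hΓ]
  have h1 : Tc * (Sc - μ • 1) = (Φc - μ • 1) * Tc := by
    rw [Matrix.mul_sub, Matrix.sub_mul, hTSc, Matrix.mul_smul, Matrix.smul_mul,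
      Matrix.mul_one, Matrix.one_mul]
  have key : ∀ k : ℕ, Tc * (Sc - μ • 1) ^ k = (Φc - μ • 1) ^ k * Tc := by
    intro k
    induction k with
    | zero => simp
    | succ k ih =>
        rw [pow_succ, ← Matrix.mul_assoc, ih, Matrix.mul_assoc, h1, ← Matrix.mul_assoc,
          ← pow_succ]
  have hmaps : ∀ x ∈ Module.End.maxGenEigenspace (Matrix.toLin' Sc) μ,
      Matrix.toLin' Tc x ∈ Module.End.maxGenEigenspace (Matrix.toLin' Φc) μ := by
    intro x hx
    rw [aux_mem_maxGen] at hx ⊢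
    obtain ⟨k, hk⟩ := hx
    refine ⟨k, ?_⟩
    rw [Matrix.toLin'_apply, Matrix.mulVec_mulVec, ← key, ← Matrix.mulVec_mulVec, hk,
      Matrix.mulVec_zero]
  -- the kernel of Tc meets the generalized eigenspace trivially
  have hK : LinearMap.ker (Matrix.toLin' Tc)
      ⊓ Module.End.maxGenEigenspace (Matrix.toLin' Sc) μ = ⊥ := by
    by_contra hbot
    set K := LinearMap.ker (Matrix.toLin' Tc)
      ⊓ Module.End.maxGenEigenspace (Matrix.toLin' Sc) μ with hKdef
    haveI : Nontrivial K := Submodule.nontrivial_iff_ne_bot.mpr hbot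
    have hSK : ∀ x ∈ K, Matrix.toLin' Sc x ∈ K := by
      intro x hx
      obtain ⟨hx1, hx2⟩ := Submodule.mem_inf.mp hx
      refine Submodule.mem_inf.mpr
        ⟨?_, Module.End.mapsTo_maxGenEigenspace_of_comm (Commute.refl _) μ hx2⟩
      rw [LinearMap.mem_ker, Matrix.toLin'_apply, Matrix.toLin'_apply,
        Matrix.mulVec_mulVec, hTSc, ← Matrix.mulVec_mulVec]
      rw [LinearMap.mem_ker, Matrix.toLin'_apply] at hx1
      rw [hx1, Matrix.mulVec_zero]
    let g := (Matrix.toLin' Sc).restrict hSK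
    obtain ⟨lam, hlam⟩ := Module.End.exists_eigenvalue g
    obtain ⟨w, hw⟩ := hlam.exists_hasEigenvector
    have hw0 : (w : Fin p → ℂ) ≠ 0 := fun h => hw.2 (Subtype.ext h)
    have hwv : Matrix.toLin' Sc (w : Fin p → ℂ) = lam • (w : Fin p → ℂ) := by
      have h := hw.apply_eq_smul
      have := congrArg (Subtype.val) h
      rwa [LinearMap.restrict_coe_apply] at this
    have hwK : (w : Fin p → ℂ) ∈ LinearMap.ker (Matrix.toLin' Tc)
        ∧ (w : Fin p → ℂ) ∈ Module.End.maxGenEigenspace (Matrix.toLin' Sc) μ :=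
      Submodule.mem_inf.mp w.2
    have hker : Tc.mulVec (w : Fin p → ℂ) = 0 := by
      have := hwK.1
      rwa [LinearMap.mem_ker, Matrix.toLin'_apply] at this
    have hlamμ : lam = μ := by
      by_contra hne
      have hdisj := Module.End.disjoint_genEigenspace (Matrix.toLin' Sc) hne 1 ⊤
      have hm1 : (w : Fin p → ℂ) ∈ Module.End.genEigenspace (Matrix.toLin' Sc) lam 1 :=
        Module.End.mem_genEigenspace_one.mpr hwv
      exact hw0 (Submodule.disjoint_def.mp hdisj _ hm1 hwK.2)
    refine hw0 (hdet μ hre _ ?_ ?_)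
    · rw [← Matrix.toLin'_apply, hwv, hlamμ]
    · rw [← hΓc, hΓTc, ← Matrix.mulVec_mulVec, hker, Matrix.mulVec_zero]
  -- conclude with an injective linear map between the generalized eigenspaces
  let L := (Matrix.toLin' Tc).restrict hmaps
  have hinj : Function.Injective L := by
    intro x y hxy
    have hz : L (x - y) = 0 := by rw [map_sub, hxy, sub_self]
    have hz' : Matrix.toLin' Tc ((x : Fin p → ℂ) - y) = 0 := by
      have := congrArg Subtype.val hz
      rwa [LinearMap.restrict_coe_apply] at this
    have hmem : ((x : Fin p → ℂ) - y) ∈ LinearMap.ker (Matrix.toLin' Tc)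
        ⊓ Module.End.maxGenEigenspace (Matrix.toLin' Sc) μ :=
      Submodule.mem_inf.mpr ⟨LinearMap.mem_ker.mpr hz', Submodule.sub_mem _ x.2 y.2⟩
    rw [hK, Submodule.mem_bot, sub_eq_zero] at hmem
    exact Subtype.ext hmem
  exact LinearMap.finrank_le_finrank_of_injective hinj

/-- If `TS = ΦT`, `Γ = ΛT` and `(Γ, S)` is detectable, then every
purely imaginary eigenvalue `iα` of `S` of algebraic multiplicity `k` is an
eigenvalue of `Φ` of algebraic multiplicity at least `k`; consequently `ν ≥ p`
whenever all eigenvalues of `S` lie on the imaginary axis. -/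

theorem stmt3 (p ν : ℕ)
    (S : Matrix (Fin p) (Fin p) ℝ) (Φ : Matrix (Fin ν) (Fin ν) ℝ)
    (T : Matrix (Fin ν) (Fin p) ℝ)
    (Γ : Matrix (Fin 1) (Fin p) ℝ) (Λ : Matrix (Fin 1) (Fin ν) ℝ)
    (hTS : T * S = Φ * T) (hΓ : Γ = Λ * T)
    (hdet : Detectable3 Γ S) :
    (∀ α : ℝ,
      Polynomial.rootMultiplicity ((α : ℂ) * Complex.I)
          (Matrix.charpoly (S.map (Complex.ofReal))) ≤
        Polynomial.rootMultiplicity ((α : ℂ) * Complex.I)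
          (Matrix.charpoly (Φ.map (Complex.ofReal)))) ∧
    ((∀ μ ∈ spectrum ℂ (S.map (Complex.ofReal)), μ.re = 0) → p ≤ ν) := by
  classical
  have h1 : ∀ α : ℝ,
      Polynomial.rootMultiplicity ((α : ℂ) * Complex.I)
          (Matrix.charpoly (S.map (Complex.ofReal))) ≤
        Polynomial.rootMultiplicity ((α : ℂ) * Complex.I)
          (Matrix.charpoly (Φ.map (Complex.ofReal))) := by
    intro α
    rw [aux_rootMultiplicity, aux_rootMultiplicity]
    refine aux_finrank_le p ν S Φ T Γ Λ hTS hΓ hdet _ ?_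
    simp [Complex.mul_re]
  refine ⟨h1, fun hspec => ?_⟩
  set cS := Matrix.charpoly (S.map (Complex.ofReal)) with hcS
  set cΦ := Matrix.charpoly (Φ.map (Complex.ofReal)) with hcΦ
  have hcS0 : cS ≠ 0 := (Matrix.charpoly_monic _).ne_zero
  have hcount : ∀ μ ∈ cS.roots.toFinset, cS.roots.count μ ≤ cΦ.roots.count μ := by
    intro μ hμ
    have hroot : cS.IsRoot μ :=
      (Polynomial.mem_roots'.mp (Multiset.mem_toFinset.mp hμ)).2
    have hre := hspec μ (aux_root_mem_spectrum _ hroot)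
    have hμeq : ((μ.im : ℝ) : ℂ) * Complex.I = μ := by
      conv_rhs => rw [← Complex.re_add_im μ]
      rw [hre, Complex.ofReal_zero, zero_add]
    rw [Polynomial.count_roots, Polynomial.count_roots, ← hμeq]
    exact h1 μ.im
  have hsub : cS.roots.toFinset ⊆ cΦ.roots.toFinset := by
    intro μ hμ
    have hpos : 0 < cΦ.roots.count μ :=
      lt_of_lt_of_le (Multiset.count_pos.mpr (Multiset.mem_toFinset.mp hμ)) (hcount μ hμ)
    exact Multiset.mem_toFinset.mpr (Multiset.count_pos.mp hpos)
  calc p = cS.natDegree := by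
            rw [hcS, Matrix.charpoly_natDegree_eq_dim, Fintype.card_fin]
    _ = Multiset.card cS.roots :=
          ((Polynomial.splits_iff_card_roots.mp (IsAlgClosed.splits cS))).symm
    _ = ∑ μ ∈ cS.roots.toFinset, cS.roots.count μ :=
          (Multiset.toFinset_sum_count_eq _).symm
    _ ≤ ∑ μ ∈ cS.roots.toFinset, cΦ.roots.count μ := Finset.sum_le_sum hcount
    _ ≤ ∑ μ ∈ cΦ.roots.toFinset, cΦ.roots.count μ :=
          Finset.sum_le_sum_of_subset hsub
    _ = Multiset.card cΦ.roots := Multiset.toFinset_sum_count_eq _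
    _ ≤ cΦ.natDegree := Polynomial.card_roots' cΦ
    _ = ν := by rw [hcΦ, Matrix.charpoly_natDegree_eq_dim, Fintype.card_fin]
end

section
/- Let $A \in \mathbb{R}^{n\times n}$, $B \in \mathbb{R}^{n\times 1}$, $P \in \mathbb{R}^{n\times p}$, $S \in \mathbb{R}^{p\times p}$, $C \in \mathbb{R}^{1\times n}$, $D \in \mathbb{R}$, $Q \in \mathbb{R}^{1\times p}$, and suppose there exist $\Pi \in \mathbb{R}^{n\times p}$ and $\Gamma \in \mathbb{R}^{1\times p}$ with $\Pi S = A\Pi + B\Gamma + P$ and $C\Pi + D\Gamma + Q = 0$. If the pair $\left(\begin{bmatrix} C & Q\end{bmatrix}, \begin{bmatrix} A & P \\ 0 & S\end{bmatrix}\right)$ is detectable, then the pair $(\Gamma, S)$ is detectable. -/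
/-- Hautus-test detectability of a pair `(M, N)` of real matrices, considered
over the complexification. -/
def Detectable4 {n : Type*} [Fintype n] [DecidableEq n]
    (M : Matrix (Fin 1) n ℝ) (N : Matrix n n ℝ) : Prop :=
  ∀ lam : ℂ, 0 ≤ lam.re → ∀ v : n → ℂ,
    (N.map (Complex.ofReal)).mulVec v = lam • v →
    (M.map (Complex.ofReal)).mulVec v = 0 → v = 0

/-- If the linearized regulator equations `ΠS = AΠ + BΓ + P` and
`CΠ + DΓ + Q = 0` hold and the pair `([C Q], [[A,P],[0,S]])` is detectable,
then the pair `(Γ, S)` is detectable. -/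
theorem stmt4 (n p : ℕ)
    (A : Matrix (Fin n) (Fin n) ℝ) (B : Matrix (Fin n) (Fin 1) ℝ)
    (P : Matrix (Fin n) (Fin p) ℝ) (S : Matrix (Fin p) (Fin p) ℝ)
    (C : Matrix (Fin 1) (Fin n) ℝ) (D : ℝ) (Q : Matrix (Fin 1) (Fin p) ℝ)
    (Pi : Matrix (Fin n) (Fin p) ℝ) (Γ : Matrix (Fin 1) (Fin p) ℝ)
    (hreg1 : Pi * S = A * Pi + B * Γ + P)
    (hreg2 : C * Pi + D • Γ + Q = 0)
    (hdet : Detectable4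
      (Matrix.of fun i j => Sum.elim (C i) (Q i) j)
      (Matrix.fromBlocks A P 0 S)) :
    Detectable4 Γ S := by
  intro lam hlam v hv hΓv
  set f := Complex.ofRealHom with hf
  have hmap : ∀ {k l : Type} [Fintype k] [Fintype l] (M : Matrix k l ℝ),
      M.map Complex.ofReal = M.map f := fun _ => rfl
  have hadd : ∀ a₁ a₂ : ℝ, f (a₁ + a₂) = f a₁ + f a₂ := fun a b => map_add f a b
  have hsmul : ∀ a : ℝ, f (D • a) = D • f a := fun a => by
    simp only [hf, smul_eq_mul, Complex.ofRealHom_eq_coe, Complex.ofReal_mul,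
      Complex.real_smul]
  set w : Fin n ⊕ Fin p → ℂ := Sum.elim ((Pi.map Complex.ofReal).mulVec v) v with hw
  have hbig : ((Matrix.fromBlocks A P 0 S).map Complex.ofReal).mulVec w = lam • w := by
    rw [hmap, Matrix.fromBlocks_map, Matrix.fromBlocks_mulVec]
    have hcomp1 : w ∘ Sum.inl = (Pi.map Complex.ofReal).mulVec v := rfl
    have hcomp2 : w ∘ Sum.inr = v := rfl
    rw [hcomp1, hcomp2]
    have hreg1' : (Pi.map f) * (S.map f) = (A.map f) * (Pi.map f)
        + (B.map f) * (Γ.map f) + (P.map f) := by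
      rw [← Matrix.map_mul, ← Matrix.map_mul, ← Matrix.map_mul,
        ← Matrix.map_add f hadd, ← Matrix.map_add f hadd, hreg1]
    have key : (A.map f).mulVec ((Pi.map f).mulVec v) + (P.map f).mulVec v
        = lam • ((Pi.map f).mulVec v) := by
      have h1 : (Pi.map f).mulVec ((S.map f).mulVec v)
          = (A.map f).mulVec ((Pi.map f).mulVec v)
            + (B.map f).mulVec ((Γ.map f).mulVec v) + (P.map f).mulVec v := by
        rw [Matrix.mulVec_mulVec, hreg1']
        simp [Matrix.add_mulVec, Matrix.mulVec_mulVec]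
      rw [hmap] at hv hΓv
      rw [hv, hΓv] at h1
      simpa [Matrix.mulVec_smul] using h1.symm
    ext i
    rcases i with i | i
    · have h := congrFun key i; simp [hw] at h ⊢; exact h
    · have h := congrFun hv i; simp [hw, Matrix.zero_mulVec] at h ⊢; exact h
  have hout : ((Matrix.of fun i j => Sum.elim (C i) (Q i) j :
      Matrix (Fin 1) (Fin n ⊕ Fin p) ℝ).map Complex.ofReal).mulVec w = 0 := by
    have hreg2' : (C.map f) * (Pi.map f) + D • (Γ.map f) + (Q.map f) = 0 := by
      rw [← Matrix.map_mul, ← Matrix.map_smul f D hsmul,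
        ← Matrix.map_add f hadd, ← Matrix.map_add f hadd, hreg2]
      ext i j; simp
    have hCP : (C.map f).mulVec ((Pi.map f).mulVec v) + (Q.map f).mulVec v = 0 := by
      have h2 : ((C.map f) * (Pi.map f) + D • (Γ.map f) + (Q.map f)).mulVec v = 0 := by
        rw [hreg2']; exact Matrix.zero_mulVec v
      rw [hmap] at hΓv
      simpa [Matrix.add_mulVec, Matrix.mulVec_mulVec, Matrix.smul_mulVec, hΓv] using h2
    have hsplit : ((Matrix.of fun i j => Sum.elim (C i) (Q i) j :
        Matrix (Fin 1) (Fin n ⊕ Fin p) ℝ).map Complex.ofReal).mulVec w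
        = (C.map f).mulVec ((Pi.map f).mulVec v) + (Q.map f).mulVec v := by
      ext i
      simp only [Matrix.mulVec, dotProduct, Matrix.map_apply, Matrix.of_apply,
        Pi.add_apply]
      rw [Fintype.sum_sum_type]
      simp only [hw, Sum.elim_inl, Sum.elim_inr, Pi.add_apply]
      congr 1
    rw [hsplit]
    exact hCP
  have hw0 := hdet lam hlam w hbig hout
  ext i
  have := congrFun hw0 (Sum.inr i)
  exact this
end

section
/- Let $A \in \mathbb{R}^{n\times n}$ be Hurwitz (all eigenvalues have negative real part), and let $B, P, S, C, D, Q, \Pi, \Gamma$ be as follows: $\Pi S = A\Pi + B\Gamma + P$ and $C\Pi + D\Gamma + Q = 0$, where $B \in \mathbb{R}^{n\times 1}$, $C \in \mathbb{R}^{1\times n}$, $D \in \mathbb{R}$. Suppose the pair $\left(\begin{bmatrix} C & Q\end{bmatrix}, \begin{bmatrix} A & P \\ 0 & S\end{bmatrix}\right)$ is detectable and all eigenvalues of $S$ lie on the imaginary axis. Then the transfer function $\mathbf{G}(z) = C(zI-A)^{-1}B + D$ satisfies $\mathbf{G}(i\alpha) \ne 0$ for every eigenvalue $i\alpha$ of $S$.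 -/
/-- Hautus-test detectability of a pair `(M, N)` of real matrices, considered
over the complexification. -/
def Detectable5 {n : Type*} [Fintype n] [DecidableEq n]
    (M : Matrix (Fin 1) n ℝ) (N : Matrix n n ℝ) : Prop :=
  ∀ lam : ℂ, 0 ≤ lam.re → ∀ v : n → ℂ,
    (N.map (Complex.ofReal)).mulVec v = lam • v →
    (M.map (Complex.ofReal)).mulVec v = 0 → v = 0

private lemma mapC_mul {a b c : ℕ} (M : Matrix (Fin a) (Fin b) ℝ)
    (N : Matrix (Fin b) (Fin c) ℝ) :
    (M * N).map Complex.ofReal = M.map Complex.ofReal * N.map Complex.ofReal :=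
  Matrix.map_mul (f := Complex.ofRealHom)

private lemma mapC_add {a b : ℕ} (M N : Matrix (Fin a) (Fin b) ℝ) :
    (M + N).map Complex.ofReal = M.map Complex.ofReal + N.map Complex.ofReal := by
  ext i j; simp

private lemma mapC_smul {a b : ℕ} (d : ℝ) (M : Matrix (Fin a) (Fin b) ℝ) :
    (d • M).map Complex.ofReal = (d : ℂ) • M.map Complex.ofReal := by
  ext i j; simp

/-- If `A` is Hurwitz, the linearized regulator equations hold,
the pair `([C Q], [[A,P],[0,S]])` is detectable and all eigenvalues of `S` are
purely imaginary, then the transfer function `G(z) = C (zI - A)⁻¹ B + D`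
satisfies `G(iα) ≠ 0` for every eigenvalue `iα` of `S`. -/
theorem stmt5 (n p : ℕ)
    (A : Matrix (Fin n) (Fin n) ℝ) (B : Matrix (Fin n) (Fin 1) ℝ)
    (P : Matrix (Fin n) (Fin p) ℝ) (S : Matrix (Fin p) (Fin p) ℝ)
    (C : Matrix (Fin 1) (Fin n) ℝ) (D : ℝ) (Q : Matrix (Fin 1) (Fin p) ℝ)
    (Pi : Matrix (Fin n) (Fin p) ℝ) (Γ : Matrix (Fin 1) (Fin p) ℝ)
    (hHurwitz : ∀ μ ∈ spectrum ℂ (A.map (Complex.ofReal)), μ.re < 0)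
    (hreg1 : Pi * S = A * Pi + B * Γ + P)
    (hreg2 : C * Pi + D • Γ + Q = 0)
    (hdet : Detectable5
      (Matrix.of fun i j => Sum.elim (C i) (Q i) j)
      (Matrix.fromBlocks A P 0 S))
    (hSim : ∀ μ ∈ spectrum ℂ (S.map (Complex.ofReal)), μ.re = 0) :
    ∀ α : ℝ, ((α : ℂ) * Complex.I) ∈ spectrum ℂ (S.map (Complex.ofReal)) →
      ((C.map (Complex.ofReal)) *
          (((α : ℂ) * Complex.I) • (1 : Matrix (Fin n) (Fin n) ℂ)
            - A.map (Complex.ofReal))⁻¹ *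
          (B.map (Complex.ofReal))) 0 0 + (D : ℂ) ≠ 0 := by
  intro α hα hG
  set μ : ℂ := (α : ℂ) * Complex.I with hμdef
  set Ac := A.map Complex.ofReal
  set Bc := B.map Complex.ofReal
  set Pc := P.map Complex.ofReal
  set Sc := S.map Complex.ofReal
  set Cc := C.map Complex.ofReal
  set Qc := Q.map Complex.ofReal
  set Pic := Pi.map Complex.ofReal
  set Γc := Γ.map Complex.ofReal
  set M : Matrix (Fin n) (Fin n) ℂ := μ • (1 : Matrix (Fin n) (Fin n) ℂ) - Ac with hMdef
  -- μ has zero real part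
  have hμre : μ.re = 0 := by simp [hμdef]
  -- M is invertible since μ ∉ spectrum of A
  have hμA : μ ∉ spectrum ℂ Ac := fun h => by
    have := hHurwitz μ h; rw [hμre] at this; exact lt_irrefl 0 this
  have hMunit : IsUnit M := by
    rw [spectrum.mem_iff, not_not, Algebra.algebraMap_eq_smul_one] at hμA
    exact hμA
  have hMdet : IsUnit M.det := (Matrix.isUnit_iff_isUnit_det M).mp hMunit
  have hMinv : M⁻¹ * M = 1 := Matrix.nonsing_inv_mul M hMdet
  have hMinv' : M * M⁻¹ = 1 := Matrix.mul_nonsing_inv M hMdet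
  -- eigenvector of Sc
  have hSdet : (μ • (1 : Matrix (Fin p) (Fin p) ℂ) - Sc).det = 0 := by
    rw [spectrum.mem_iff, Algebra.algebraMap_eq_smul_one,
      Matrix.isUnit_iff_isUnit_det] at hα
    by_contra h
    exact hα (isUnit_iff_ne_zero.mpr h)
  obtain ⟨w, hw0, hww⟩ := Matrix.exists_mulVec_eq_zero_iff.mpr hSdet
  have hSw : Sc.mulVec w = μ • w := by
    have := hww
    rw [Matrix.sub_mulVec, Matrix.smul_mulVec, Matrix.one_mulVec,
      sub_eq_zero] at this
    exact this.symm
  -- complexified regulator equations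
  have hreg1c : Pic * Sc = Ac * Pic + Bc * Γc + Pc := by
    have : (Pi * S).map Complex.ofReal
        = (A * Pi + B * Γ + P).map Complex.ofReal := by rw [hreg1]
    rwa [mapC_mul, mapC_add, mapC_add, mapC_mul, mapC_mul] at this
  have hreg2c : Cc * Pic + (D : ℂ) • Γc + Qc = 0 := by
    have : (C * Pi + D • Γ + Q).map Complex.ofReal
        = (0 : Matrix (Fin 1) (Fin p) ℝ).map Complex.ofReal := by rw [hreg2]
    rw [mapC_add, mapC_add, mapC_mul, mapC_smul] at this
    simpa using this
  -- key identity: M.mulVec (Pic.mulVec w) = Bc.mulVec (Γc.mulVec w) + Pc.mulVec w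
  have hkey : M.mulVec (Pic.mulVec w) = Bc.mulVec (Γc.mulVec w) + Pc.mulVec w := by
    have h1 : Pic.mulVec (Sc.mulVec w)
        = Ac.mulVec (Pic.mulVec w) + (Bc.mulVec (Γc.mulVec w) + Pc.mulVec w) := by
      rw [Matrix.mulVec_mulVec, Matrix.mulVec_mulVec, Matrix.mulVec_mulVec, hreg1c,
        Matrix.add_mulVec, Matrix.add_mulVec]
      ring_nf
    rw [hSw] at h1
    have : Pic.mulVec (μ • w) = μ • Pic.mulVec w := by
      rw [Matrix.mulVec_smul]
    rw [this] at h1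
    rw [hMdef, Matrix.sub_mulVec, Matrix.smul_mulVec, Matrix.one_mulVec]
    rw [h1]
    abel
  -- define x
  set x : Fin n → ℂ := M⁻¹.mulVec (Pc.mulVec w) with hxdef
  have hMx : M.mulVec x = Pc.mulVec w := by
    rw [hxdef, Matrix.mulVec_mulVec, hMinv', Matrix.one_mulVec]
  -- x = Pic.mulVec w - M⁻¹.mulVec (Bc.mulVec (Γc.mulVec w))
  have hx : x = Pic.mulVec w - M⁻¹.mulVec (Bc.mulVec (Γc.mulVec w)) := by
    have h2 : M⁻¹.mulVec (M.mulVec (Pic.mulVec w))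
        = M⁻¹.mulVec (Bc.mulVec (Γc.mulVec w)) + M⁻¹.mulVec (Pc.mulVec w) := by
      rw [hkey, Matrix.mulVec_add]
    rw [Matrix.mulVec_mulVec, hMinv, Matrix.one_mulVec] at h2
    rw [hxdef, eq_sub_iff_add_eq, add_comm, ← h2]
  -- the big eigenvector
  set v : Fin n ⊕ Fin p → ℂ := Sum.elim x w with hvdef
  -- apply detectability
  have hbig : ((Matrix.fromBlocks A P 0 S).map Complex.ofReal).mulVec v = μ • v := by
    rw [Matrix.fromBlocks_map, Matrix.fromBlocks_mulVec]
    have hz : (Matrix.map 0 Complex.ofReal : Matrix (Fin p) (Fin n) ℂ) = 0 := by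
      ext i j; simp
    funext ij
    cases ij with
    | inl i =>
      have : Ac.mulVec x + Pc.mulVec w = μ • x := by
        have := hMx
        rw [hMdef, Matrix.sub_mulVec, Matrix.smul_mulVec,
          Matrix.one_mulVec, sub_eq_iff_eq_add] at this
        rw [this]; abel
      simpa [hvdef] using congrFun this i
    | inr j =>
      have : (0 : Matrix (Fin p) (Fin n) ℂ).mulVec x + Sc.mulVec w = μ • w := by
        rw [Matrix.zero_mulVec, zero_add, hSw]
      simp only [hz, Sum.elim_inr]
      simpa [hvdef] using congrFun this j
  have hout : ((Matrix.of fun i j => Sum.elim (C i) (Q i) j).map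
      Complex.ofReal).mulVec v = 0 := by
    funext i
    have hsum : ((Matrix.of fun i j => Sum.elim (C i) (Q i) j).map
        Complex.ofReal).mulVec v i = Cc.mulVec x i + Qc.mulVec w i := by
      simp only [Matrix.mulVec, dotProduct, Fintype.sum_sum_type]
      congr 1
        <;> apply Finset.sum_congr rfl <;> intro j _
        <;> simp [hvdef, Matrix.map_apply, Cc, Qc]
    rw [hsum]
    -- compute Cc.mulVec x
    have hCx : Cc.mulVec x = Cc.mulVec (Pic.mulVec w)
        - (Cc * M⁻¹ * Bc).mulVec (Γc.mulVec w) := by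
      simp only [hx, Matrix.mulVec_sub, Matrix.mulVec_mulVec, Matrix.mul_assoc]
    have hCPi : Cc.mulVec (Pic.mulVec w)
        = -((D : ℂ) • Γc.mulVec w) - Qc.mulVec w := by
      have h3 : (Cc * Pic).mulVec w + ((D : ℂ) • Γc).mulVec w + Qc.mulVec w = 0 := by
        rw [← Matrix.add_mulVec, ← Matrix.add_mulVec, hreg2c, Matrix.zero_mulVec]
      rw [Matrix.mulVec_mulVec]
      rw [Matrix.smul_mulVec] at h3
      linear_combination (norm := module) h3
    -- 1×1 matrix action: (Cc * M⁻¹ * Bc).mulVec u i = (Cc*M⁻¹*Bc) 0 0 * u 0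
    have h11 : (Cc * M⁻¹ * Bc).mulVec (Γc.mulVec w) i
        = (Cc * M⁻¹ * Bc) 0 0 * (Γc.mulVec w) 0 := by
      have hi : i = 0 := Subsingleton.elim i 0
      subst hi
      simp [Matrix.mulVec, dotProduct, Fin.sum_univ_one]
    have hG' : (Cc * M⁻¹ * Bc) 0 0 = -(D : ℂ) := by linear_combination hG
    have hi : i = 0 := Subsingleton.elim i 0
    subst hi
    have e1 : Cc.mulVec x 0 = Cc.mulVec (Pic.mulVec w) 0
        - (-(D : ℂ)) * Γc.mulVec w 0 := by
      rw [hCx, _root_.Pi.sub_apply, h11, hG']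
    have e2 : Cc.mulVec (Pic.mulVec w) 0
        = -((D : ℂ) * Γc.mulVec w 0) - Qc.mulVec w 0 := by
      rw [hCPi]; simp
    show Cc.mulVec x 0 + Qc.mulVec w 0 = 0
    rw [e1, e2]; ring
  have := hdet μ (le_of_eq hμre.symm) v hbig hout
  exact hw0 (funext fun j => congrFun this (Sum.inr j))
end

section
/- Consider the planar system $\dot w_1 = w_2 - w_1^4$, $\dot w_2 = -w_1^3$. The origin $(0,0)$ is a Lyapunov stable equilibrium point: for every $\varepsilon > 0$ there exists $\delta > 0$ such that every solution with initial condition of norm less than $\delta$ exists for all $t \ge 0$ and remains of norm less than $\varepsilon$. -/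
open Real Set Filter Topology

section Stmt8Aux

noncomputable def Vfun (p : ℝ × ℝ) : ℝ :=
  p.1 ^ 4 / 4 + (p.2 - p.1 ^ 4) / 4 - Real.log (1 + 4 * (p.2 - p.1 ^ 4)) / 16

lemma log_quad_ub {u : ℝ} (h1 : -(1/2) ≤ u) : u - Real.log (1 + u) ≤ 2 * u ^ 2 := by
  have hpos : (0:ℝ) < 1 + u := by linarith
  have h := Real.log_le_sub_one_of_pos (x := (1+u)⁻¹) (by positivity)
  rw [Real.log_inv] at h
  have : Real.log (1+u) ≥ 1 - (1+u)⁻¹ := by linarith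
  have hinv : (1+u)⁻¹ = 1/(1+u) := by ring
  have key2 : 1/(1+u) ≤ 1 - u + 2*u^2 := by
    rw [div_le_iff₀ hpos]; nlinarith [sq_nonneg u]
  rw [hinv] at this
  linarith

lemma log_quad_lb {u : ℝ} (h1 : -(1/2) ≤ u) (h2 : u ≤ 1/2) :
    u ^ 2 / 6 ≤ u - Real.log (1 + u) := by
  have hpos : (0:ℝ) < 1 + u := by linarith
  set s := Real.sqrt (1 + u) with hs
  have hs0 : 0 < s := Real.sqrt_pos.mpr hpos
  have hs2 : s ^ 2 = 1 + u := Real.sq_sqrt hpos.le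
  have hlog : Real.log (1 + u) = 2 * Real.log s := by
    rw [hs, Real.log_sqrt hpos.le]; ring
  have hls : Real.log s ≤ s - 1 := Real.log_le_sub_one_of_pos hs0
  have hsub : s ≤ 5/4 := by
    have : s ≤ Real.sqrt (3/2) := Real.sqrt_le_sqrt (by linarith)
    have h32 : Real.sqrt (3/2) ≤ 5/4 := by
      rw [show (3/2 : ℝ) = (5/4)^2 - 1/16 by norm_num]
      calc Real.sqrt ((5/4:ℝ)^2 - 1/16) ≤ Real.sqrt ((5/4:ℝ)^2) := Real.sqrt_le_sqrt (by norm_num)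
        _ = 5/4 := by rw [Real.sqrt_sq]; norm_num
    linarith
  have key : u - Real.log (1+u) ≥ (s - 1)^2 := by
    rw [hlog]
    nlinarith
  have hu2 : u ^ 2 = (s-1)^2 * (s+1)^2 := by
    have : u = s^2 - 1 := by linarith
    rw [this]; ring
  nlinarith [sq_nonneg (s-1)]

lemma V_lb {x y : ℝ} (h : |y - x ^ 4| ≤ 1/8) :
    x ^ 4 / 4 + (y - x ^ 4) ^ 2 / 6 ≤ Vfun (x, y) := by
  obtain ⟨h1, h2⟩ := abs_le.mp h
  set z := y - x ^ 4 with hz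
  have := log_quad_lb (u := 4 * z) (by linarith) (by linarith)
  simp only [Vfun]
  have : (4*z)^2/6 ≤ 4*z - Real.log (1 + 4*z) := this
  nlinarith [this]

lemma V_ub {x y : ℝ} (h : |y - x ^ 4| ≤ 1/8) :
    Vfun (x, y) ≤ x ^ 4 / 4 + 2 * (y - x ^ 4) ^ 2 := by
  obtain ⟨h1, h2⟩ := abs_le.mp h
  set z := y - x ^ 4 with hz
  have := log_quad_ub (u := 4 * z) (by linarith)
  simp only [Vfun]
  nlinarith [this]
lemma hasDerivAt_Vcomp (w : ℝ → ℝ × ℝ) (t : ℝ)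
    (hw : HasDerivAt w ((w t).2 - (w t).1 ^ 4, -(w t).1 ^ 3) t)
    (hdom : 1 + 4 * ((w t).2 - (w t).1 ^ 4) ≠ 0) :
    HasDerivAt (fun s => Vfun (w s)) 0 t := by
  set x := (w t).1
  set y := (w t).2
  have hx : HasDerivAt (fun s => (w s).1) (y - x ^ 4) t :=
    hw.fst
  have hy : HasDerivAt (fun s => (w s).2) (-x ^ 3) t :=
    hw.snd
  have hx4 : HasDerivAt (fun s => ((w s).1) ^ 4) ((4:ℕ) * x ^ 3 * (y - x ^ 4)) t := by
    simpa using hx.fun_pow 4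
  have hz : HasDerivAt (fun s => (w s).2 - ((w s).1) ^ 4)
      (-x ^ 3 - (4:ℕ) * x ^ 3 * (y - x ^ 4)) t := hy.sub hx4
  have hlin : HasDerivAt (fun s => 1 + 4 * ((w s).2 - ((w s).1) ^ 4))
      (4 * (-x ^ 3 - (4:ℕ) * x ^ 3 * (y - x ^ 4))) t := (hz.const_mul 4).const_add 1
  have hlog := (hlin.log hdom)
  have hV : HasDerivAt (fun s => Vfun (w s))
      (((4:ℕ) * x ^ 3 * (y - x ^ 4)) / 4 + (-x ^ 3 - (4:ℕ) * x ^ 3 * (y - x ^ 4)) / 4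
        - (4 * (-x ^ 3 - (4:ℕ) * x ^ 3 * (y - x ^ 4)) / (1 + 4 * (y - x ^ 4))) / 16) t := by
    exact ((hx4.div_const 4).add (hz.div_const 4)).sub (hlog.div_const 16)
  have hE : (((4:ℕ) * x ^ 3 * (y - x ^ 4)) / 4 + (-x ^ 3 - (4:ℕ) * x ^ 3 * (y - x ^ 4)) / 4
        - (4 * (-x ^ 3 - (4:ℕ) * x ^ 3 * (y - x ^ 4)) / (1 + 4 * (y - x ^ 4))) / 16) = 0 := by
    have h1 : (4 * (-x ^ 3 - (4:ℕ) * x ^ 3 * (y - x ^ 4)) / (1 + 4 * (y - x ^ 4))) = -4 * x ^ 3 := by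
      rw [div_eq_iff hdom]; push_cast; ring
    rw [h1]; push_cast; ring
  rwa [hE] at hV
lemma norm_comp {p : ℝ × ℝ} : ‖p‖ = max |p.1| |p.2| := by
  rw [Prod.norm_def, Real.norm_eq_abs, Real.norm_eq_abs]

lemma z_small {p : ℝ × ℝ} {r : ℝ} (hr1 : r ≤ 1/16) (h : ‖p‖ ≤ r) :
    |p.2 - p.1 ^ 4| ≤ 1/8 := by
  rw [norm_comp] at h
  have hx : |p.1| ≤ r := le_trans (le_max_left _ _) h
  have hy : |p.2| ≤ r := le_trans (le_max_right _ _) h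
  have hx4 : |p.1 ^ 4| ≤ r ^ 4 := by
    rw [abs_pow]; exact pow_le_pow_left₀ (abs_nonneg _) hx 4
  have h1 : |p.2 - p.1 ^ 4| ≤ r + r ^ 4 := le_trans (abs_sub _ _) (by gcongr)
  have hr0 : 0 ≤ r := le_trans (abs_nonneg _) hx
  nlinarith [pow_le_pow_left₀ hr0 hr1 4]

lemma dom_pos {p : ℝ × ℝ} {r : ℝ} (hr1 : r ≤ 1/16) (h : ‖p‖ ≤ r) :
    (0:ℝ) < 1 + 4 * (p.2 - p.1 ^ 4) := by
  have := abs_le.mp (z_small hr1 h)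
  linarith [this.1]

lemma region_norm_lt {p : ℝ × ℝ} {r : ℝ} (hr0 : 0 < r) (hr1 : r ≤ 1/16)
    (h : ‖p‖ ≤ r) (hV : Vfun p < r ^ 4 / 100) : ‖p‖ < r / 2 := by
  have hz := z_small hr1 h
  have hlb := V_lb (x := p.1) (y := p.2) hz
  rw [Prod.mk.eta] at hlb
  rw [norm_comp] at h ⊢
  have hx : |p.1| ≤ r := le_trans (le_max_left _ _) h
  set z := p.2 - p.1 ^ 4 with hzdef
  have hx4nn : (0:ℝ) ≤ p.1 ^ 4 := by positivity
  have hz2 : z ^ 2 / 6 ≤ Vfun p := by nlinarith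
  have hx4 : p.1 ^ 4 / 4 ≤ Vfun p := by nlinarith [sq_nonneg z]
  have h1 : |p.1| < r / 2 := by
    have : |p.1| ^ 4 < (r/2) ^ 4 := by
      rw [← abs_pow, abs_of_nonneg hx4nn]
      nlinarith
    exact lt_of_pow_lt_pow_left₀ 4 (by positivity) this
  have h2 : |z| < r ^ 2 / 4 := by
    have : |z| ^ 2 < (r ^ 2 / 4) ^ 2 := by
      rw [sq_abs]
      nlinarith
    exact lt_of_pow_lt_pow_left₀ 2 (by positivity) this
  have h3 : |p.2| < r / 2 := by
    have hb : |p.2| ≤ |z| + |p.1| ^ 4 := by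
      rw [← abs_pow]
      calc |p.2| = |z + p.1 ^ 4| := by rw [hzdef]; ring_nf
        _ ≤ |z| + |p.1 ^ 4| := abs_add_le _ _
    have h4 : |p.1| ^ 4 ≤ r ^ 4 := pow_le_pow_left₀ (abs_nonneg _) hx 4
    have e1 : r ^ 2 / 4 ≤ r / 64 := by nlinarith
    have e2 : r ^ 4 ≤ r / 4096 := by
      nlinarith [mul_le_mul_of_nonneg_left (pow_le_pow_left₀ hr0.le hr1 3) hr0.le]
    linarith
  exact max_lt h1 h3

lemma V_small {p : ℝ × ℝ} {r : ℝ} (hr0 : 0 < r) (hr1 : r ≤ 1/16)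
    (h : ‖p‖ < r ^ 4 / 900) : Vfun p < r ^ 4 / 100 := by
  have hrle1 : r ≤ 1 := by linarith
  have hr4 : r ^ 4 ≤ r := pow_le_of_le_one hr0.le hrle1 (by norm_num)
  have hd : r ^ 4 / 900 ≤ r := by linarith
  have hz := z_small hr1 (le_trans h.le hd)
  have hub := V_ub (x := p.1) (y := p.2) hz
  rw [Prod.mk.eta] at hub
  rw [norm_comp] at h
  have hx : |p.1| < r ^ 4 / 900 := lt_of_le_of_lt (le_max_left _ _) h
  have hy : |p.2| < r ^ 4 / 900 := lt_of_le_of_lt (le_max_right _ _) h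
  set δ := r ^ 4 / 900 with hδ
  have hδ1 : δ ≤ 1 := by rw [hδ]; linarith
  have hδ0 : 0 < δ := by positivity
  have hx4 : |p.1| ^ 4 < δ ^ 4 := pow_lt_pow_left₀ hx (abs_nonneg _) (by norm_num)
  have hzb : |p.2 - p.1 ^ 4| < 2 * δ := by
    have h5 : |p.1| ^ 4 ≤ |p.1| := pow_le_of_le_one (abs_nonneg _) (by linarith) (by norm_num)
    calc |p.2 - p.1 ^ 4| ≤ |p.2| + |p.1| ^ 4 := by
          rw [← abs_pow]; exact abs_sub _ _
      _ < 2 * δ := by linarith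
  have key : Vfun p < δ ^ 4 / 4 + 8 * δ ^ 2 := by
    have e1 : p.1 ^ 4 ≤ |p.1| ^ 4 := by rw [← abs_pow]; exact le_abs_self _
    have e2 : (p.2 - p.1 ^ 4) ^ 2 < (2 * δ) ^ 2 := by
      nlinarith [abs_nonneg (p.2 - p.1 ^ 4), sq_abs (p.2 - p.1 ^ 4)]
    nlinarith
  have k2 : Vfun p < 9 * δ ^ 2 := by
    have : δ ^ 4 ≤ δ ^ 2 := pow_le_pow_of_le_one hδ0.le hδ1 (by norm_num)
    linarith [pow_pos hδ0 2]
  have h9 : 9 * δ ^ 2 < r ^ 4 / 100 := by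
    rw [hδ]
    nlinarith [pow_pos hr0 4]
  linarith
lemma lemA {r : ℝ} (hr0 : 0 < r) (hr1 : r ≤ 1/16) (G : ℝ × ℝ → ℝ × ℝ)
    (hG : ∀ p : ℝ × ℝ, ‖p‖ ≤ r → G p = (p.2 - p.1 ^ 4, -p.1 ^ 3))
    (w : ℝ → ℝ × ℝ) (hw : ∀ t, 0 ≤ t → HasDerivAt w (G (w t)) t)
    (h0 : ‖w 0‖ < r ^ 4 / 900) :
    ∀ t, 0 ≤ t → ‖w t‖ < r / 2 := by
  have hr4 : r ^ 4 ≤ r := pow_le_of_le_one hr0.le (by linarith) (by norm_num)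
  have hδr : r ^ 4 / 900 ≤ r / 2 := by linarith
  have h0r : ‖w 0‖ < r / 2 := lt_of_lt_of_le h0 hδr
  have hV0 : Vfun (w 0) < r ^ 4 / 100 := V_small hr0 hr1 h0
  have conserve : ∀ T, 0 ≤ T → (∀ s ∈ Icc (0:ℝ) T, ‖w s‖ ≤ r) →
      Vfun (w T) = Vfun (w 0) := by
    intro T hT hreg
    have hder : ∀ s ∈ Icc (0:ℝ) T, HasDerivAt (fun u => Vfun (w u)) 0 s := by
      intro s hs
      have hws := hw s hs.1
      rw [hG (w s) (hreg s hs)] at hws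
      exact hasDerivAt_Vcomp w s hws (ne_of_gt (dom_pos hr1 (hreg s hs)))
    exact constant_of_has_deriv_right_zero
      (fun s hs => (hder s hs).continuousAt.continuousWithinAt)
      (fun s hs => (hder s (Ico_subset_Icc_self hs)).hasDerivWithinAt)
      T (by exact ⟨hT, le_rfl⟩)
  have hbound : ∀ t, 0 ≤ t → ‖w t‖ ≤ r := by
    by_contra hcon
    push_neg at hcon
    obtain ⟨t₁, ht₁, ht₁r⟩ := hcon
    set B : Set ℝ := {t : ℝ | 0 ≤ t ∧ r < ‖w t‖} with hB
    have hBne : B.Nonempty := ⟨t₁, ht₁, ht₁r⟩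
    have hBbd : BddBelow B := ⟨0, fun b hb => hb.1⟩
    set T := sInf B with hT
    have hT0 : 0 ≤ T := le_csInf hBne (fun b hb => hb.1)
    have hless : ∀ s, 0 ≤ s → s < T → ‖w s‖ ≤ r := by
      intro s hs hsT
      by_contra hc
      push_neg at hc
      exact absurd (csInf_le hBbd ⟨hs, hc⟩) (not_le.mpr hsT)
    have hc : ContinuousAt (fun s => ‖w s‖) T := (hw T hT0).continuousAt.norm
    have hwT_le : ‖w T‖ ≤ r := by
      rcases eq_or_lt_of_le hT0 with h | hTpos
      · rw [← h]; exact le_trans h0.le (by linarith)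
      · have tend : Tendsto (fun s => ‖w s‖) (𝓝[<] T) (𝓝 ‖w T‖) :=
          hc.tendsto.mono_left nhdsWithin_le_nhds
        have hev : ∀ᶠ s in 𝓝[<] T, ‖w s‖ ≤ r := by
          have h1 : ∀ᶠ s in 𝓝[<] T, 0 < s :=
            ((isOpen_Ioi.eventually_mem hTpos).filter_mono nhdsWithin_le_nhds)
          filter_upwards [h1, self_mem_nhdsWithin] with s hs1 hs2
          exact hless s hs1.le hs2
        exact le_of_tendsto tend hev
    have hwT_ge : r ≤ ‖w T‖ := by
      have hTc : T ∈ closure B := csInf_mem_closure hBne hBbd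
      have : (𝓝[B] T).NeBot := mem_closure_iff_nhdsWithin_neBot.mp hTc
      have tend : Tendsto (fun s => ‖w s‖) (𝓝[B] T) (𝓝 ‖w T‖) :=
        hc.tendsto.mono_left nhdsWithin_le_nhds
      have hev : ∀ᶠ s in 𝓝[B] T, r ≤ ‖w s‖ :=
        eventually_nhdsWithin_of_forall (fun s hs => hs.2.le)
      exact ge_of_tendsto tend hev
    have hreg : ∀ s ∈ Icc (0:ℝ) T, ‖w s‖ ≤ r := by
      intro s hs
      rcases lt_or_eq_of_le hs.2 with h | h
      · exact hless s hs.1 h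
      · rw [h]; exact hwT_le
    have := region_norm_lt hr0 hr1 hwT_le (by rw [conserve T hT0 hreg]; exact hV0)
    linarith
  intro t ht
  have hreg : ∀ s ∈ Icc (0:ℝ) t, ‖w s‖ ≤ r := fun s hs => hbound s hs.1
  exact region_norm_lt hr0 hr1 (hbound t ht) (by rw [conserve t ht hreg]; exact hV0)

def clamp (s : ℝ) : ℝ := max (-1) (min 1 s)

def Ffield (p : ℝ × ℝ) : ℝ × ℝ :=
  (clamp p.2 - (clamp p.1) ^ 4, -(clamp p.1) ^ 3)

lemma clamp_mem (s : ℝ) : -1 ≤ clamp s ∧ clamp s ≤ 1 :=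
  ⟨le_max_left _ _, max_le (by norm_num) (min_le_left _ _)⟩

lemma clamp_lip (a b : ℝ) : |clamp a - clamp b| ≤ |a - b| := by
  unfold clamp
  calc |max (-1) (min 1 a) - max (-1) (min 1 b)| ≤ |min 1 a - min 1 b| := by
        rw [max_comm (-1) _, max_comm (-1) _]; exact abs_max_sub_max_le_abs _ _ _
    _ ≤ max |(1:ℝ) - 1| |a - b| := abs_min_sub_min_le_max _ _ _ _
    _ ≤ |a - b| := by simp

lemma clamp_eq {s : ℝ} (h : |s| ≤ 1) : clamp s = s := by
  obtain ⟨h1, h2⟩ := abs_le.mp h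
  unfold clamp
  rw [min_eq_right h2, max_eq_right h1]

lemma pow4_lip {a b : ℝ} (ha : |a| ≤ 1) (hb : |b| ≤ 1) : |a ^ 4 - b ^ 4| ≤ 4 * |a - b| := by
  have h : a ^ 4 - b ^ 4 = (a - b) * (a ^ 3 + a ^ 2 * b + a * b ^ 2 + b ^ 3) := by ring
  rw [h, abs_mul, mul_comm]
  have : |a ^ 3 + a ^ 2 * b + a * b ^ 2 + b ^ 3| ≤ 4 := by
    calc |a ^ 3 + a ^ 2 * b + a * b ^ 2 + b ^ 3|
        ≤ |a ^ 3| + |a ^ 2 * b| + |a * b ^ 2| + |b ^ 3| := by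
          calc |a ^ 3 + a ^ 2 * b + a * b ^ 2 + b ^ 3|
              ≤ |a ^ 3 + a ^ 2 * b + a * b ^ 2| + |b ^ 3| := abs_add_le _ _
            _ ≤ |a ^ 3| + |a ^ 2 * b| + |a * b ^ 2| + |b ^ 3| := by
                linarith [abs_add_three (a^3) (a^2*b) (a*b^2)]
      _ ≤ 4 := by
          rw [abs_mul, abs_mul, abs_pow, abs_pow, abs_pow, abs_pow]
          nlinarith [abs_nonneg a, abs_nonneg b, pow_le_one₀ (abs_nonneg a) ha (n := 3),
            pow_le_one₀ (abs_nonneg a) ha (n := 2), pow_le_one₀ (abs_nonneg b) hb (n := 3),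
            pow_le_one₀ (abs_nonneg b) hb (n := 2), abs_le.mp ha, abs_le.mp hb]
  exact mul_le_mul_of_nonneg_right this (abs_nonneg _)

lemma pow3_lip {a b : ℝ} (ha : |a| ≤ 1) (hb : |b| ≤ 1) : |a ^ 3 - b ^ 3| ≤ 3 * |a - b| := by
  have h : a ^ 3 - b ^ 3 = (a - b) * (a ^ 2 + a * b + b ^ 2) := by ring
  rw [h, abs_mul, mul_comm]
  have : |a ^ 2 + a * b + b ^ 2| ≤ 3 := by
    calc |a ^ 2 + a * b + b ^ 2| ≤ |a ^ 2| + |a * b| + |b ^ 2| := abs_add_three _ _ _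
      _ ≤ 3 := by
          rw [abs_mul, abs_pow, abs_pow]
          nlinarith [abs_nonneg a, abs_nonneg b, pow_le_one₀ (abs_nonneg a) ha (n := 2),
            pow_le_one₀ (abs_nonneg b) hb (n := 2), abs_le.mp ha, abs_le.mp hb]
  exact mul_le_mul_of_nonneg_right this (abs_nonneg _)

lemma Ffield_lip : LipschitzWith 5 Ffield := by
  apply LipschitzWith.of_dist_le_mul
  intro p q
  simp only [Prod.dist_eq, Ffield, Real.dist_eq]
  have hclx := clamp_lip p.1 q.1
  have hcly := clamp_lip p.2 q.2
  have hax : |clamp p.1| ≤ 1 := abs_le.mpr (clamp_mem p.1)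
  have hbx : |clamp q.1| ≤ 1 := abs_le.mpr (clamp_mem q.1)
  have h4 := pow4_lip hax hbx
  have h3 := pow3_lip hax hbx
  have hd1 : |clamp p.2 - (clamp p.1) ^ 4 - (clamp q.2 - (clamp q.1) ^ 4)|
      ≤ |p.2 - q.2| + 4 * |p.1 - q.1| := by
    calc |clamp p.2 - (clamp p.1) ^ 4 - (clamp q.2 - (clamp q.1) ^ 4)|
        = |(clamp p.2 - clamp q.2) + ((clamp q.1) ^ 4 - (clamp p.1) ^ 4)| := by ring_nf
      _ ≤ |clamp p.2 - clamp q.2| + |(clamp q.1) ^ 4 - (clamp p.1) ^ 4| := abs_add_le _ _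
      _ ≤ |p.2 - q.2| + 4 * |p.1 - q.1| := by
          have := pow4_lip hbx hax
          have := clamp_lip q.1 p.1
          rw [abs_sub_comm q.1 p.1] at this
          linarith
  have hd2 : |-(clamp p.1) ^ 3 - -(clamp q.1) ^ 3| ≤ 3 * |p.1 - q.1| := by
    have : |-(clamp p.1) ^ 3 - -(clamp q.1) ^ 3| = |(clamp p.1) ^ 3 - (clamp q.1) ^ 3| := by
      rw [← abs_neg]; ring_nf
    rw [this]; linarith
  have hm1 : |p.1 - q.1| ≤ max |p.1 - q.1| |p.2 - q.2| := le_max_left _ _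
  have hm2 : |p.2 - q.2| ≤ max |p.1 - q.1| |p.2 - q.2| := le_max_right _ _
  push_cast
  apply max_le
  · linarith [abs_nonneg (p.1 - q.1), abs_nonneg (p.2 - q.2)]
  · linarith [abs_nonneg (p.1 - q.1), abs_nonneg (p.2 - q.2)]

lemma Ffield_bdd (p : ℝ × ℝ) : ‖Ffield p‖ ≤ 2 := by
  rw [Prod.norm_def]
  simp only [Ffield, Real.norm_eq_abs]
  have h1 := clamp_mem p.1
  have h2 := clamp_mem p.2
  apply max_le
  · have : |(clamp p.1) ^ 4| ≤ 1 := by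
      rw [abs_pow]; exact pow_le_one₀ (abs_nonneg _) (abs_le.mpr h1)
    have := abs_le.mp this
    have := abs_le.mp (abs_le.mpr h2 : |clamp p.2| ≤ 1)
    rw [abs_le]; constructor <;> nlinarith [abs_le.mp (abs_le.mpr h1 : |clamp p.1| ≤ 1),
      (abs_le.mp (by rw [abs_pow]; exact pow_le_one₀ (abs_nonneg _) (abs_le.mpr h1) :
        |(clamp p.1) ^ 4| ≤ 1))]
  · rw [abs_neg, abs_pow]
    have : |clamp p.1| ^ 3 ≤ 1 := pow_le_one₀ (abs_nonneg _) (abs_le.mpr h1)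
    linarith

lemma Ffield_eq {p : ℝ × ℝ} (h : ‖p‖ ≤ 1) : Ffield p = (p.2 - p.1 ^ 4, -p.1 ^ 3) := by
  rw [Prod.norm_def] at h
  have hx : |p.1| ≤ 1 := le_trans (le_max_left _ _) (by simpa [Real.norm_eq_abs] using h)
  have hy : |p.2| ≤ 1 := le_trans (le_max_right _ _) (by simpa [Real.norm_eq_abs] using h)
  simp only [Ffield, clamp_eq hx, clamp_eq hy]

lemma exists_global (w0 : ℝ × ℝ) :
    ∃ w : ℝ → ℝ × ℝ, w 0 = w0 ∧ ∀ t : ℝ, HasDerivAt w (Ffield (w t)) t := by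
  have hn : ∀ n : ℕ, ∃ f : ℝ → ℝ × ℝ, f 0 = w0 ∧
      ∀ t ∈ Ioo (-(n + 1 : ℝ)) (n + 1), HasDerivAt f (Ffield (f t)) t := by
    intro n
    have hn1 : (0 : ℝ) ≤ (n : ℝ) + 1 := by positivity
    have hpl : IsPicardLindelof (fun _ p => Ffield p) (tmin := -((n : ℝ) + 1))
        (tmax := (n : ℝ) + 1) ⟨0, by constructor <;> linarith⟩ w0
        (2 * ((n : NNReal) + 1)) 0 2 5 := by
      refine IsPicardLindelof.of_time_independent (fun x _ => Ffield_bdd x)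
        Ffield_lip.lipschitzOnWith ?_
      push_cast
      rw [sub_zero, zero_sub, neg_neg, max_self, sub_zero]
    obtain ⟨f, hf0, hf⟩ := hpl.exists_eq_forall_mem_Icc_hasDerivWithinAt₀
    exact ⟨f, hf0, fun t ht =>
      (hf t (Ioo_subset_Icc_self ht)).hasDerivAt (Icc_mem_nhds ht.1 ht.2)⟩
  choose sol hsol0 hsol using hn
  have uniq : ∀ (m n : ℕ) (t : ℝ), |t| < (m : ℝ) + 1 → |t| < (n : ℝ) + 1 →
      sol m t = sol n t := by
    intro m n t hm hn'
    set c : ℝ := min ((m : ℝ) + 1) ((n : ℝ) + 1) with hc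
    have hc0 : 0 < c := lt_min (by positivity) (by positivity)
    have hmem : t ∈ Ioo (-c) c := by
      obtain ⟨h1, h2⟩ := abs_lt.mp (lt_min hm hn')
      exact ⟨h1, h2⟩
    have hsub1 : Ioo (-c) c ⊆ Ioo (-((m : ℝ) + 1)) ((m : ℝ) + 1) := by
      apply Ioo_subset_Ioo <;> simp [hc]
    have hsub2 : Ioo (-c) c ⊆ Ioo (-((n : ℝ) + 1)) ((n : ℝ) + 1) := by
      apply Ioo_subset_Ioo <;> simp [hc]
    have := ODE_solution_unique_of_mem_Ioo (v := fun _ p => Ffield p)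
      (s := fun _ => univ) (K := 5)
      (fun _ _ => Ffield_lip.lipschitzOnWith (s := univ))
      (t₀ := 0) (a := -c) (b := c) ⟨by linarith, hc0⟩
      (f := sol m) (g := sol n)
      (fun s hs => ⟨hsol m s (hsub1 hs), mem_univ _⟩)
      (fun s hs => ⟨hsol n s (hsub2 hs), mem_univ _⟩)
      (by rw [hsol0 m, hsol0 n])
    exact this hmem
  refine ⟨fun t => sol (⌊|t|⌋₊ + 1) t, ?_, ?_⟩
  · simp only [abs_zero, Nat.floor_zero]
    exact hsol0 1
  · intro t
    set N := ⌊|t|⌋₊ + 2 with hN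
    have htN : |t| < (N : ℝ) := by
      push_cast [hN]
      linarith [Nat.lt_floor_add_one |t|]
    have hev : (fun s => sol (⌊|s|⌋₊ + 1) s) =ᶠ[𝓝 t] sol N := by
      filter_upwards [Metric.ball_mem_nhds t one_pos] with s hs
      rw [Metric.mem_ball, Real.dist_eq] at hs
      have hsN : |s| < (N : ℝ) + 1 := by
        have : |s| ≤ |t| + |s - t| := by
          calc |s| = |t + (s - t)| := by ring_nf
            _ ≤ |t| + |s - t| := abs_add_le _ _
        linarith
      have hs1 : |s| < ((⌊|s|⌋₊ + 1 : ℕ) : ℝ) + 1 := by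
        push_cast
        linarith [Nat.lt_floor_add_one |s|]
      exact uniq (⌊|s|⌋₊ + 1) N s hs1 hsN
    have hdN : HasDerivAt (sol N) (Ffield (sol N t)) t := by
      apply hsol N t
      obtain ⟨h1, h2⟩ := abs_lt.mp htN
      exact ⟨by linarith, by linarith⟩
    have heq : sol (⌊|t|⌋₊ + 1) t = sol N t := by
      apply uniq
      · push_cast; linarith [Nat.lt_floor_add_one |t|]
      · push_cast [hN]; linarith [Nat.lt_floor_add_one |t|]
    have goal : HasDerivAt (fun s => sol (⌊|s|⌋₊ + 1) s) (Ffield (sol N t)) t :=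
      hdN.congr_of_eventuallyEq hev
    simpa only [heq] using goal

end Stmt8Aux

/-- The origin is a Lyapunov stable equilibrium of the planar
system `ẇ₁ = w₂ - w₁⁴`, `ẇ₂ = -w₁³`: for every `ε > 0` there is `δ > 0` such
that every solution starting with norm `< δ` exists for all `t ≥ 0` and
remains of norm `< ε`. -/
theorem stmt8 :
    ∀ ε > (0:ℝ), ∃ δ > (0:ℝ),
      (∀ w0 : ℝ × ℝ, ‖w0‖ < δ → ∃ w : ℝ → ℝ × ℝ, w 0 = w0 ∧
        (∀ t : ℝ, 0 ≤ t →
          HasDerivAt w ((w t).2 - (w t).1 ^ 4, -(w t).1 ^ 3) t) ∧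
        (∀ t : ℝ, 0 ≤ t → ‖w t‖ < ε)) ∧
      (∀ w : ℝ → ℝ × ℝ,
        (∀ t : ℝ, 0 ≤ t →
          HasDerivAt w ((w t).2 - (w t).1 ^ 4, -(w t).1 ^ 3) t) →
        ‖w 0‖ < δ → ∀ t : ℝ, 0 ≤ t → ‖w t‖ < ε) := by
  intro ε hε
  set r : ℝ := min (ε/2) (1/16) with hrdef
  have hr0 : 0 < r := lt_min (by linarith) (by norm_num)
  have hr1 : r ≤ 1/16 := min_le_right _ _
  have hrε : r ≤ ε/2 := min_le_left _ _
  refine ⟨r ^ 4 / 900, by positivity, ?_, ?_⟩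
  · intro w0 hw0
    obtain ⟨w, hw00, hwd⟩ := exists_global w0
    have hG : ∀ p : ℝ × ℝ, ‖p‖ ≤ r → Ffield p = (p.2 - p.1 ^ 4, -p.1 ^ 3) :=
      fun p hp => Ffield_eq (le_trans hp (by linarith))
    have hbd := lemA hr0 hr1 Ffield hG w (fun t _ => hwd t) (by rw [hw00]; exact hw0)
    refine ⟨w, hw00, fun t ht => ?_, fun t ht => ?_⟩
    · have hd := hwd t
      rwa [hG (w t) (le_trans (hbd t ht).le (by linarith))] at hd
    · exact lt_of_lt_of_le (hbd t ht) (by linarith)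
  · intro w hwd hw0 t ht
    have hG : ∀ p : ℝ × ℝ, ‖p‖ ≤ r →
        (fun q : ℝ × ℝ => (q.2 - q.1 ^ 4, -q.1 ^ 3)) p = (p.2 - p.1 ^ 4, -p.1 ^ 3) :=
      fun p _ => rfl
    have hbd := lemA hr0 hr1 _ hG w (fun s hs => hwd s hs) hw0
    exact lt_of_lt_of_le (hbd t ht) (by linarith)
end

section
/- Let $S = \begin{bmatrix}0&1\\-1&0\end{bmatrix}$, $\Phi = \begin{bmatrix}0&0&0\\0&0&-2\\0&2&0\end{bmatrix}$, $\Lambda = \begin{bmatrix}1/2 & 1 & 1/2\end{bmatrix}$, and define $\tau : \mathbb{R}^2 \to \mathbb{R}^3$ by $\tau(w_1,w_2) = (w_1^2 + w_2^2,\; 2 w_1 w_2,\; w_1^2 - w_2^2)$ and $\gamma(w_1,w_2) = w_1^2 + 2 w_1 w_2$. Then for all $w \in \mathbb{R}^2$: $D\tau(w)\,(S w) = \Phi\, \tau(w)$ and $\gamma(w) = \Lambda\, \tau(w)$. Moreover, the pair $(\Lambda, \Phi)$ is detectable. -/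
/-- The autonomous system `(ℝ², w ↦ Sw, γ)` is immersed into
`(ℝ³, ξ ↦ Φξ, ξ ↦ Λξ)` via `τ(w) = (w₁²+w₂², 2w₁w₂, w₁²-w₂²)`, and the pair
`(Λ, Φ)` is detectable. -/
theorem stmt11
    (S : Matrix (Fin 2) (Fin 2) ℝ) (hS : S = !![0, 1; -1, 0])
    (Φ : Matrix (Fin 3) (Fin 3) ℝ) (hΦ : Φ = !![0, 0, 0; 0, 0, -2; 0, 2, 0])
    (Λ : Matrix (Fin 1) (Fin 3) ℝ) (hΛ : Λ = !![1/2, 1, 1/2])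
    (τ : (Fin 2 → ℝ) → (Fin 3 → ℝ))
    (hτ : τ = fun w => ![(w 0) ^ 2 + (w 1) ^ 2, 2 * w 0 * w 1,
      (w 0) ^ 2 - (w 1) ^ 2])
    (γ : (Fin 2 → ℝ) → ℝ)
    (hγ : γ = fun w => (w 0) ^ 2 + 2 * (w 0) * (w 1)) :
    (∀ w : Fin 2 → ℝ, fderiv ℝ τ w (S.mulVec w) = Φ.mulVec (τ w)) ∧
    (∀ w : Fin 2 → ℝ, γ w = (Λ.mulVec (τ w)) 0) ∧
    (∀ lam : ℂ, 0 ≤ lam.re → ∀ v : Fin 3 → ℂ,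
      (Φ.map (Complex.ofReal)).mulVec v = lam • v →
      (Λ.map (Complex.ofReal)).mulVec v = 0 → v = 0) := by
  subst hS hΦ hΛ hτ hγ
  refine ⟨?_, ?_, ?_⟩
  · intro w
    set p0 : (Fin 2 → ℝ) →L[ℝ] ℝ := ContinuousLinearMap.proj 0
    set p1 : (Fin 2 → ℝ) →L[ℝ] ℝ := ContinuousLinearMap.proj 1
    have h0 : HasFDerivAt (fun x : Fin 2 → ℝ => x 0) p0 w := hasFDerivAt_apply 0 w
    have h1 : HasFDerivAt (fun x : Fin 2 → ℝ => x 1) p1 w := hasFDerivAt_apply 1 w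
    have d0 : HasFDerivAt (fun x : Fin 2 → ℝ => x 0 * x 0 + x 1 * x 1)
        ((2 * w 0) • p0 + (2 * w 1) • p1) w := by
      have := (h0.mul h0).add (h1.mul h1)
      refine this.congr_fderiv ?_
      ext u
      simp
      ring
    have d1 : HasFDerivAt (fun x : Fin 2 → ℝ => 2 * x 0 * x 1)
        ((2 * w 1) • p0 + (2 * w 0) • p1) w := by
      have := (h0.const_mul 2).mul h1
      refine this.congr_fderiv ?_
      ext u
      simp
      ring
    have d2 : HasFDerivAt (fun x : Fin 2 → ℝ => x 0 * x 0 - x 1 * x 1)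
        ((2 * w 0) • p0 - (2 * w 1) • p1) w := by
      have := (h0.mul h0).sub (h1.mul h1)
      refine this.congr_fderiv ?_
      ext u
      simp
      ring
    have hd : HasFDerivAt (fun w : Fin 2 → ℝ => ![(w 0) ^ 2 + (w 1) ^ 2, 2 * w 0 * w 1,
        (w 0) ^ 2 - (w 1) ^ 2])
        (ContinuousLinearMap.pi ![(2 * w 0) • p0 + (2 * w 1) • p1,
          (2 * w 1) • p0 + (2 * w 0) • p1, (2 * w 0) • p0 - (2 * w 1) • p1]) w := by
      apply hasFDerivAt_pi''
      intro i
      fin_cases i <;> simp only [ContinuousLinearMap.proj_pi, pow_two] <;>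
        simp <;> [exact d0; exact d1; exact d2]
    rw [hd.fderiv]
    funext i
    fin_cases i <;>
      simp [Matrix.mulVec, dotProduct, Fin.sum_univ_three, Fin.sum_univ_two, p0, p1] <;>
      ring
  · intro w
    simp [Matrix.mulVec, dotProduct, Fin.sum_univ_three]
    ring
  · intro lam _ v hΦv hΛv
    have e0 := congrFun hΦv 0
    have e1 := congrFun hΦv 1
    have e2 := congrFun hΦv 2
    have eΛ := congrFun hΛv 0
    simp [Matrix.mulVec, dotProduct, Fin.sum_univ_three] at e0 e1 e2 eΛ
    rcases eq_or_ne lam 0 with h | h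
    · subst h
      simp at e0 e1 e2
      have hv0 : v 0 = 0 := by linear_combination 2 * eΛ - 2 * e2 - e1
      funext i
      fin_cases i <;> simp only [Pi.zero_apply] <;> [exact hv0; exact e2; exact e1]
    · have hv0 : v 0 = 0 := by
        rcases e0 with h0 | h0
        · exact absurd h0 h
        · exact h0
      have hv1 : v 1 = 0 := by
        have h2 : v 2 = -2 * v 1 := by linear_combination 2 * eΛ - hv0
        have ha : lam * v 1 = 4 * v 1 := by linear_combination -e1 - 2 * h2
        have hb : (2 : ℂ) * v 1 = -2 * (lam * v 1) := by
          linear_combination e2 + lam * h2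
        have h10 : (10 : ℂ) * v 1 = 0 := by linear_combination hb - 2 * ha
        linear_combination h10 / 10
      have hv2 : v 2 = 0 := by linear_combination 2 * eΛ - hv0 - 2 * hv1
      funext i
      fin_cases i <;> simp only [Pi.zero_apply] <;> [exact hv0; exact hv1; exact hv2]
end

section
/- Let $F \in \mathbb{R}^{2\times 2}$, $S = \begin{bmatrix}0&1\\-1&0\end{bmatrix}$, and $a_1,a_2,b_1,b_2,c_1,c_2 \in \mathbb{R}$ be such that for all $(w_1,w_2) \in \mathbb{R}^2$, $\begin{bmatrix} a_1 w_1 + c_1 w_2 & b_1 w_2 + c_1 w_1 \\ a_2 w_1 + c_2 w_2 & b_2 w_2 + c_2 w_1\end{bmatrix} S \begin{bmatrix} w_1 \\ w_2\end{bmatrix} = \frac{1}{2} F \begin{bmatrix} a_1 & b_1 & 2c_1 \\ a_2 & b_2 & 2c_2 \end{bmatrix}\begin{bmatrix} w_1^2 \\ w_2^2 \\ w_1 w_2\end{bmatrix}$. Then $F\begin{bmatrix} c_1 \\ c_2\end{bmatrix} = \begin{bmatrix} a_1 - b_1 \\ a_2 - b_2\end{bmatrix}$ and $F^2 \begin{bmatrix}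 c_1 \\ c_2\end{bmatrix} = -4 \begin{bmatrix} c_1 \\ c_2\end{bmatrix}$. -/
/-- Matching quadratic coefficients in the identity
`M(w) S (w₁, w₂)ᵀ = ½ F [[a₁,b₁,2c₁],[a₂,b₂,2c₂]] (w₁², w₂², w₁w₂)ᵀ`
yields `F (c₁,c₂)ᵀ = (a₁-b₁, a₂-b₂)ᵀ` and `F² (c₁,c₂)ᵀ = -4 (c₁,c₂)ᵀ`. -/
theorem stmt12 (F : Matrix (Fin 2) (Fin 2) ℝ)
    (S : Matrix (Fin 2) (Fin 2) ℝ) (hS : S = !![0, 1; -1, 0])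
    (a1 a2 b1 b2 c1 c2 : ℝ)
    (h : ∀ w1 w2 : ℝ,
      (!![a1 * w1 + c1 * w2, b1 * w2 + c1 * w1;
          a2 * w1 + c2 * w2, b2 * w2 + c2 * w1] * S).mulVec ![w1, w2] =
      ((1/2 : ℝ) • (F * !![a1, b1, 2 * c1; a2, b2, 2 * c2])).mulVec
        ![w1 ^ 2, w2 ^ 2, w1 * w2]) :
    F.mulVec ![c1, c2] = ![a1 - b1, a2 - b2] ∧
    (F * F).mulVec ![c1, c2] = (-4 : ℝ) • ![c1, c2] := by
  subst hS
  have e1 := congrFun (h 1 0) 0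
  have e2 := congrFun (h 1 0) 1
  have e3 := congrFun (h 0 1) 0
  have e4 := congrFun (h 0 1) 1
  have e5 := congrFun (h 1 1) 0
  have e6 := congrFun (h 1 1) 1
  simp [Matrix.mulVec, Matrix.mul_apply, Fin.sum_univ_succ, dotProduct,
    Matrix.smul_apply] at e1 e2 e3 e4 e5 e6
  constructor <;> funext i <;> fin_cases i <;>
    simp [Matrix.mulVec, Matrix.mul_apply, Fin.sum_univ_succ, dotProduct]
  · linear_combination e1 + e3 - e5
  · linear_combination e2 + e4 - e6
  · linear_combination -(F 0 0)*(e5 - e1 - e3) - (F 0 1)*(e6 - e2 - e4) - 2*e1 + 2*e3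
  · linear_combination -(F 1 0)*(e5 - e1 - e3) - (F 1 1)*(e6 - e2 - e4) - 2*e2 + 2*e4
end

section
/- Let $\alpha, L, r, z_{10}, z_{20}, \mathcal{D}_0 > 0$, let $w_1 \in \mathbb{R}$, $\rho \ge 0$, and let $\beta \in (0,1)$ with $\rho < \beta \mathcal{D}_0 z_{20}$. Consider the scalar ODE $\frac{d\psi}{d\tau} = \frac{r\psi^2 + (r z_{20} - w_1 - \mathcal{D}_0 z_{10})\psi - z_{20} w_1 + z_{10}\rho\cos\tau}{\alpha L (\psi + z_{20})}$. If $\psi(0) > -z_{20}$, then the maximal solution exists for all $\tau \ge 0$ and satisfies $\psi(\tau) > -z_{20}$ for all $\tau \ge 0$. -/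
open Set Filter
open scoped NNReal Topology

lemma sqrt_diff_le (δ x y : ℝ) (hδ : 0 < δ) (hx : δ ≤ x) (hy : δ ≤ y) :
    |Real.sqrt (2*x) - Real.sqrt (2*y)| ≤ |x - y| / Real.sqrt (2*δ) := by
  set a := Real.sqrt (2*x) with ha
  set b := Real.sqrt (2*y) with hb
  set s := Real.sqrt (2*δ) with hs
  have hsd : 0 < s := Real.sqrt_pos.2 (by linarith)
  have hsa : s ≤ a := Real.sqrt_le_sqrt (by linarith)
  have hsb : s ≤ b := Real.sqrt_le_sqrt (by linarith)
  have ha2 : a^2 = 2*x := Real.sq_sqrt (by linarith)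
  have hb2 : b^2 = 2*y := Real.sq_sqrt (by linarith)
  have hprod : (a - b) * (a + b) = 2*x - 2*y := by nlinarith
  have habs : |a - b| * (a + b) = |2*x - 2*y| := by
    rw [← hprod, abs_mul, abs_of_nonneg (by linarith : (0:ℝ) ≤ a + b)]
  have h2 : |2*x - 2*y| = 2 * |x - y| := by
    rw [show 2*x - 2*y = 2*(x-y) by ring, abs_mul, abs_of_nonneg (by norm_num : (0:ℝ) ≤ 2)]
  rw [le_div_iff₀ hsd]
  nlinarith [abs_nonneg (a - b), abs_nonneg (x - y)]

lemma ode_step (F : ℝ → ℝ → ℝ) (K : ℝ≥0) (hlip : ∀ t, LipschitzWith K (F t))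
    (hcont : ∀ x, Continuous fun t => F t x) (B : ℝ) (hB0 : 0 ≤ B) (hB : ∀ t, |F t 0| ≤ B)
    (t₀ x₀ : ℝ) :
    ∃ f : ℝ → ℝ, f t₀ = x₀ ∧ ∀ t ∈ Set.Icc t₀ (t₀ + (2*((K:ℝ)+1))⁻¹),
      HasDerivWithinAt f (F t (f t)) (Set.Icc t₀ (t₀ + (2*((K:ℝ)+1))⁻¹)) t := by
  set h : ℝ := (2*((K:ℝ)+1))⁻¹ with hh
  have hK0 : (0:ℝ) ≤ K := K.coe_nonneg
  have hhpos : 0 < h := by positivity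
  set R : ℝ := 2*h*(B + K*|x₀|) + 1 with hR
  have hRpos : 0 < R := by positivity
  set C : ℝ := B + K*(|x₀| + R) with hC
  have hC0 : 0 ≤ C := by positivity
  have ht0mem : t₀ ∈ Icc t₀ (t₀ + h) := ⟨le_rfl, by linarith⟩
  have hpl : IsPicardLindelof F (⟨t₀, ht0mem⟩ : Icc t₀ (t₀ + h)) x₀ R.toNNReal 0 C.toNNReal K := by
    constructor
    · exact fun t _ => (hlip t).lipschitzOnWith
    · exact fun x _ => (hcont x).continuousOn
    · intro t _ x hx
      rw [Real.coe_toNNReal _ hC0]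
      have h1 : |x - x₀| ≤ R := by simpa [Real.dist_eq, Real.coe_toNNReal _ hRpos.le] using hx
      have h2 : |F t x - F t 0| ≤ K * |x - 0| := by
        simpa [Real.dist_eq] using (hlip t).dist_le_mul x 0
      have h3 : |x| ≤ |x₀| + R := by
        have := abs_sub_abs_le_abs_sub x x₀
        linarith
      have : |F t x| ≤ B + K * |x| := by
        have := abs_sub_abs_le_abs_sub (F t x) (F t 0)
        have := hB t
        simp only [sub_zero] at h2
        linarith
      have h4 : (K:ℝ) * |x| ≤ K * (|x₀| + R) := by
        exact mul_le_mul_of_nonneg_left h3 hK0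
      simpa [Real.norm_eq_abs, hC] using this.trans (by linarith)
    · show (C.toNNReal : ℝ) * max (t₀ + h - t₀) (t₀ - t₀) ≤ (R.toNNReal : ℝ) - ((0 : ℝ≥0) : ℝ)
      rw [NNReal.coe_zero, sub_zero, Real.coe_toNNReal _ hRpos.le, Real.coe_toNNReal _ hC0]
      have hmax : max (t₀ + h - t₀) (t₀ - t₀) = h := by
        rw [max_eq_left] <;> simp [hhpos.le]
      rw [hmax]
      have hKh : (K:ℝ) * h ≤ 1/2 := by
        rw [hh]
        rw [mul_inv_le_iff₀ (by positivity)]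
        ring_nf
        nlinarith
      have hCh : C * h = (B + (K:ℝ)*|x₀|) * h + ((K:ℝ)*h) * R := by rw [hC]; ring
      have h5 : (B + (K:ℝ)*|x₀|) * h ≤ R/2 := by
        rw [hR]; nlinarith [abs_nonneg x₀]
      nlinarith [abs_nonneg x₀, hRpos]
  exact hpl.exists_eq_forall_mem_Icc_hasDerivWithinAt₀

lemma global_ode (F : ℝ → ℝ → ℝ) (K : ℝ≥0) (hlip : ∀ t, LipschitzWith K (F t))
    (hcont : ∀ x, Continuous fun t => F t x) (B : ℝ) (hB0 : 0 ≤ B) (hB : ∀ t, |F t 0| ≤ B)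
    (x₀ : ℝ) : ∃ f : ℝ → ℝ, f 0 = x₀ ∧ ∀ t, 0 ≤ t → HasDerivAt f (F t (f t)) t := by
  set h : ℝ := (2*((K:ℝ)+1))⁻¹ with hh
  have hK0 : (0:ℝ) ≤ K := K.coe_nonneg
  have hpos : 0 < h := by positivity
  choose stepf hstep1 hstep2 using ode_step F K hlip hcont B hB0 hB
  set seq : ℕ → (ℝ → ℝ) := fun n =>
    Nat.rec (stepf 0 x₀) (fun n fn => stepf ((n+1)*h) (fn ((n+1)*h))) n with hseq
  have seqS : ∀ n : ℕ, seq (n+1) = stepf (((n:ℝ)+1)*h) (seq n (((n:ℝ)+1)*h)) := fun n => rfl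
  have hinit : seq 0 0 = x₀ := hstep1 0 x₀
  have hmatch : ∀ n : ℕ, seq (n+1) (((n:ℝ)+1)*h) = seq n (((n:ℝ)+1)*h) := by
    intro n; rw [seqS]; exact hstep1 _ _
  have hsol : ∀ n : ℕ, ∀ t ∈ Icc ((n:ℝ)*h) (((n:ℝ)+1)*h),
      HasDerivWithinAt (seq n) (F t (seq n t)) (Icc ((n:ℝ)*h) (((n:ℝ)+1)*h)) t := by
    intro n
    have hiv : Icc ((n:ℝ)*h) (((n:ℝ)+1)*h) = Icc ((n:ℝ)*h) ((n:ℝ)*h + (2*((K:ℝ)+1))⁻¹) := by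
      rw [← hh]; congr 1; ring
    rw [hiv]
    cases n with
    | zero =>
      intro t ht
      have h0 : ((0:ℕ):ℝ) * h = 0 := by norm_num
      rw [h0] at ht ⊢
      exact hstep2 0 x₀ t ht
    | succ m =>
      intro t ht
      have hc : ((m+1:ℕ):ℝ) * h = ((m:ℝ)+1)*h := by push_cast; ring
      rw [hc] at ht ⊢
      have := hstep2 (((m:ℝ)+1)*h) (seq m (((m:ℝ)+1)*h)) t ht
      rw [← seqS] at this
      exact this
  set g : ℝ → ℝ := fun t => if t < 0 then x₀ + F 0 x₀ * t else seq ⌊t/h⌋₊ t with hg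
  have hg_eq : ∀ n : ℕ, ∀ t ∈ Icc ((n:ℝ)*h) (((n:ℝ)+1)*h), g t = seq n t := by
    intro n t ht
    have ht0 : (0:ℝ) ≤ t := le_trans (by positivity) ht.1
    rw [hg]; simp only [if_neg (not_lt.2 ht0)]
    rcases lt_or_eq_of_le ht.2 with hlt | heq
    · have hfl : ⌊t/h⌋₊ = n := by
        rw [Nat.floor_eq_iff (by positivity)]
        exact ⟨(le_div_iff₀ hpos).2 (by linarith [ht.1]), (div_lt_iff₀ hpos).2 hlt⟩
      rw [hfl]
    · have hfl : ⌊t/h⌋₊ = n + 1 := by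
        rw [heq, mul_div_assoc, div_self hpos.ne', mul_one,
          show ((n:ℝ)+1) = ((n+1:ℕ):ℝ) by push_cast; ring, Nat.floor_natCast]
      rw [hfl, heq]; exact hmatch n
  refine ⟨g, ?_, ?_⟩
  · have : g 0 = seq 0 0 := hg_eq 0 0 (by constructor <;> simp [hpos.le])
    rw [this, hinit]
  · intro t ht
    obtain ⟨n, hn⟩ : ∃ n : ℕ, ⌊t/h⌋₊ = n := ⟨_, rfl⟩
    have hn1 : (n:ℝ)*h ≤ t := by
      rw [← le_div_iff₀ hpos, ← hn]; exact Nat.floor_le (by positivity)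
    have hn2 : t < ((n:ℝ)+1)*h := by
      rw [← div_lt_iff₀ hpos, ← hn]; exact Nat.lt_floor_add_one _
    have hmemIcc : t ∈ Icc ((n:ℝ)*h) (((n:ℝ)+1)*h) := ⟨hn1, hn2.le⟩
    rcases lt_or_eq_of_le hn1 with hlt | heq
    · -- interior point
      have hmem : Icc ((n:ℝ)*h) (((n:ℝ)+1)*h) ∈ nhds t := Icc_mem_nhds hlt hn2
      have hd := (hsol n t hmemIcc).hasDerivAt hmem
      have hev : g =ᶠ[nhds t] seq n := Filter.eventuallyEq_of_mem hmem (hg_eq n)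
      have h2 := hd.congr_of_eventuallyEq hev
      rwa [hg_eq n t hmemIcc]
    · -- junction point t = n*h
      have hgt : g t = seq n t := hg_eq n t hmemIcc
      have hright : HasDerivWithinAt g (F t (g t)) (Ici t) t := by
        have hd := (hsol n t hmemIcc).congr (fun s hs => hg_eq n s hs) hgt
        rw [← hgt] at hd
        refine hd.mono_of_mem_nhdsWithin ?_
        rw [← Ici_inter_Iic, heq]
        exact inter_mem_nhdsWithin _ (Iic_mem_nhds hn2)
      have hleft : HasDerivWithinAt g (F t (g t)) (Iic t) t := by
        cases n with
        | zero =>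
          have ht0 : t = 0 := by rw [← heq]; norm_num
          subst ht0
          have hg0 : g 0 = x₀ := by
            rw [hgt]; exact_mod_cast hinit
          have hlin : HasDerivWithinAt (fun s : ℝ => x₀ + F 0 x₀ * s) (F 0 x₀) (Iic 0) 0 := by
            have : HasDerivAt (fun s : ℝ => x₀ + F 0 x₀ * s) (F 0 x₀) 0 := by
              simpa using ((hasDerivAt_id (0:ℝ)).const_mul (F 0 x₀)).const_add x₀
            exact this.hasDerivWithinAt
          have h3 := hlin.congr (f₁ := g) ?_ ?_
          · rwa [hg0]
          · intro s hs
            rcases lt_or_eq_of_le (mem_Iic.1 hs) with hs' | hs'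
            · rw [hg]; simp [hs']
            · subst hs'; rw [hg0]; simp
          · rw [hg0]; simp
        | succ m =>
          have htm : t = ((m:ℝ)+1)*h := by rw [← heq]; push_cast; ring
          have hmem : t ∈ Icc ((m:ℝ)*h) (((m:ℝ)+1)*h) := by
            constructor
            · rw [htm]; nlinarith [hpos.le]
            · exact htm.le
          have hd := (hsol m t hmem).congr (fun s hs => hg_eq m s hs) (hg_eq m t hmem)
          have hval : F t (seq m t) = F t (g t) := by
            rw [hgt, htm, hmatch m]
          rw [hval] at hd
          refine hd.mono_of_mem_nhdsWithin ?_
          rw [← Iic_inter_Ici, ← htm]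
          refine inter_mem_nhdsWithin _ (Ici_mem_nhds ?_)
          rw [htm]; nlinarith [hpos]
      have h4 := hleft.union hright
      rwa [Iic_union_Ici, hasDerivWithinAt_univ] at h4

lemma barrier (F : ℝ → ℝ → ℝ) (f : ℝ → ℝ)
    (hf : ∀ t, 0 ≤ t → HasDerivAt f (F t (f t)) t)
    (b : ℝ) (hf0 : b < f 0) (hpos : ∀ t, 0 ≤ t → 0 < F t b) :
    ∀ t, 0 ≤ t → b < f t := by
  by_contra hcon
  push_neg at hcon
  obtain ⟨t₁, ht₁0, ht₁⟩ := hcon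
  set S : Set ℝ := {t | 0 ≤ t ∧ f t ≤ b} with hS
  have hne : S.Nonempty := ⟨t₁, ht₁0, ht₁⟩
  have hbdd : BddBelow S := ⟨0, fun s hs => hs.1⟩
  set c := sInf S with hc
  have hc0 : 0 ≤ c := le_csInf hne fun s hs => hs.1
  have hcont : ContinuousAt f c := (hf c hc0).continuousAt
  -- f c ≤ b
  have hfc_le : f c ≤ b := by
    by_contra hgt
    push_neg at hgt
    have hnb : {s | b < f s} ∈ nhds c := hcont.preimage_mem_nhds (Ioi_mem_nhds hgt)
    obtain ⟨ε, hε, hball⟩ := Metric.mem_nhds_iff.1 hnb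
    obtain ⟨s, hsS, hs⟩ := exists_lt_of_csInf_lt hne (by linarith : c < c + ε)
    have hsc : c ≤ s := csInf_le hbdd hsS
    have : b < f s := hball (by rw [Metric.mem_ball, Real.dist_eq, abs_of_nonneg (by linarith)]; linarith)
    exact absurd hsS.2 (not_le.2 this)
  have hcpos : 0 < c := by
    rcases eq_or_lt_of_le hc0 with h | h
    · exfalso; rw [← h] at hfc_le; linarith
    · exact h
  have hlow : ∀ s, 0 ≤ s → s < c → b < f s := by
    intro s hs0 hsc
    by_contra hle
    push_neg at hle
    exact absurd (csInf_le hbdd ⟨hs0, hle⟩) (not_le.2 hsc)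
  -- f c ≥ b by left limit
  have hfc_ge : b ≤ f c := by
    have hne' : (𝓝[<] c).NeBot := nhdsLT_neBot c
    have htd : Filter.Tendsto f (𝓝[<] c) (𝓝 (f c)) :=
      (hcont.continuousWithinAt (s := Iio c)).tendsto
    have hev : ∀ᶠ s in 𝓝[<] c, b ≤ f s := by
      filter_upwards [Ioo_mem_nhdsLT (by linarith : (0:ℝ) < c)] with s hs
      exact (hlow s hs.1.le hs.2).le
    exact ge_of_tendsto htd hev
  have hfc : f c = b := le_antisymm hfc_le hfc_ge
  -- derivative positive at c, contradiction from the left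
  have hd : HasDerivAt f (F c b) c := by rw [← hfc]; exact hf c hc0
  have hdpos : 0 < F c b := hpos c hc0
  have hslope := hasDerivAt_iff_tendsto_slope.1 hd
  have hslope' : Tendsto (slope f c) (𝓝[<] c) (𝓝 (F c b)) :=
    hslope.mono_left (nhdsWithin_mono c fun s hs => ne_of_lt hs)
  have hev : ∀ᶠ s in 𝓝[<] c, 0 < slope f c s :=
    hslope'.eventually (eventually_gt_nhds hdpos)
  have hev2 : ∀ᶠ s in 𝓝[<] c, s ∈ Ioo (0:ℝ) c :=
    Ioo_mem_nhdsLT (by linarith : (0:ℝ) < c)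
  have hne' : (𝓝[<] c).NeBot := nhdsLT_neBot c
  obtain ⟨s, hs1, hs2⟩ := (hev.and hev2).exists
  have hslt : s < c := hs2.2
  have hnum : f s - f c < 0 := by
    have hq := hs1
    rw [slope_def_field] at hq
    rcases div_pos_iff.1 hq with ⟨h1, h2⟩ | ⟨h1, h2⟩
    · linarith
    · linarith
  have hlt : f s < b := by rw [hfc] at hnum; linarith
  exact absurd (hlow s hs2.1.le hslt) (not_lt.2 hlt.le)

set_option maxHeartbeats 1000000 in
/-- For the scalar ODE
`dψ/dτ = (rψ² + (rz₂₀ - w₁ - 𝒟₀z₁₀)ψ - z₂₀w₁ + z₁₀ρ cos τ) / (αL(ψ + z₂₀))`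
with `0 ≤ ρ < β𝒟₀z₂₀`, `β ∈ (0,1)`, any solution starting above `-z₂₀`
exists for all `τ ≥ 0` and stays above `-z₂₀`. -/
theorem stmt18 (α L r z10 z20 D0 : ℝ)
    (hα : 0 < α) (hL : 0 < L) (hr : 0 < r) (hz10 : 0 < z10) (hz20 : 0 < z20)
    (hD0 : 0 < D0) (w1 ρ : ℝ) (hρ0 : 0 ≤ ρ)
    (β : ℝ) (hβ : β ∈ Set.Ioo (0:ℝ) 1) (hρ : ρ < β * D0 * z20)
    (ψ0 : ℝ) (hψ0 : -z20 < ψ0) :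
    ∃ ψ : ℝ → ℝ, ψ 0 = ψ0 ∧ ∀ τ : ℝ, 0 ≤ τ →
      -z20 < ψ τ ∧
      HasDerivAt ψ
        ((r * (ψ τ) ^ 2 + (r * z20 - w1 - D0 * z10) * ψ τ
            - z20 * w1 + z10 * ρ * Real.cos τ) /
          (α * L * (ψ τ + z20))) τ := by
  obtain ⟨hβ0, hβ1⟩ := hβ
  have hA : 0 < α * L := mul_pos hα hL
  have hρ' : ρ < D0 * z20 := by nlinarith
  set c : ℝ := r * z20 + w1 + D0 * z10 with hc
  set gmin : ℝ := z10 * (D0 * z20 - ρ) with hgmin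
  have hgmin0 : 0 < gmin := by rw [hgmin]; nlinarith
  set ε : ℝ := gmin^2 / (2 * (|c| + 1)^2) with hε
  have hε0 : 0 < ε := by positivity
  set u0 : ℝ := (ψ0 + z20)^2 / 2 with hu0
  have hψz : 0 < ψ0 + z20 := by linarith
  have hu00 : 0 < u0 := by positivity
  set m : ℝ := min u0 ε with hm
  have hm0 : 0 < m := lt_min hu00 hε0
  set δ : ℝ := m / 2 with hδ
  have hδ0 : 0 < δ := by positivity
  set b : ℝ := (δ + m) / 2 with hb
  have hδb : δ < b := by rw [hb, hδ]; linarith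
  have hbm : b < m := by rw [hb, hδ]; linarith
  have hb0 : 0 < b := lt_trans hδ0 hδb
  have hbε : b ≤ ε := le_trans hbm.le (min_le_right _ _)
  have hbu0 : b < u0 := lt_of_lt_of_le hbm (min_le_left _ _)
  set s : ℝ := Real.sqrt (2 * δ) with hsdef
  have hs0 : 0 < s := Real.sqrt_pos.2 (by linarith)
  set F : ℝ → ℝ → ℝ := fun t u =>
    (2 * r * u - c * Real.sqrt (2 * max u δ) + z10 * (D0 * z20 + ρ * Real.cos t)) / (α * L)
    with hF
  set Kr : ℝ := (2 * r + |c| / s) / (α * L) with hKr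
  have hKr0 : 0 ≤ Kr := by positivity
  set K : ℝ≥0 := Real.toNNReal Kr with hK
  have hKco : (K : ℝ) = Kr := Real.coe_toNNReal _ hKr0
  clear_value c gmin ε u0 m δ b s F Kr K
  -- Lipschitz
  have hlip : ∀ t, LipschitzWith K (F t) := by
    intro t
    apply LipschitzWith.of_dist_le_mul
    intro x y
    rw [Real.dist_eq, Real.dist_eq, hKco]
    have hSd : |Real.sqrt (2 * max x δ) - Real.sqrt (2 * max y δ)| ≤ |x - y| / s := by
      refine le_trans (sqrt_diff_le δ (max x δ) (max y δ) hδ0 (le_max_right _ _)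
        (le_max_right _ _)) ?_
      rw [← hsdef]
      exact div_le_div_of_nonneg_right (abs_max_sub_max_le_abs x y δ) hs0.le
    have hdiff : F t x - F t y =
        (2 * r * (x - y) - c * (Real.sqrt (2 * max x δ) - Real.sqrt (2 * max y δ))) / (α * L) := by
      simp only [hF]; ring
    rw [hdiff, abs_div, abs_of_pos hA]
    have h1 : |2 * r * (x - y) - c * (Real.sqrt (2 * max x δ) - Real.sqrt (2 * max y δ))|
        ≤ 2 * r * |x - y| + |c| * (|x - y| / s) := by
      have h2 : |2 * r * (x - y)| = 2 * r * |x - y| := by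
        rw [abs_mul, abs_of_pos (by positivity : (0:ℝ) < 2 * r)]
      have h3 : |c * (Real.sqrt (2 * max x δ) - Real.sqrt (2 * max y δ))| ≤ |c| * (|x - y| / s) := by
        rw [abs_mul]
        exact mul_le_mul_of_nonneg_left hSd (abs_nonneg c)
      calc |2 * r * (x - y) - c * (Real.sqrt (2 * max x δ) - Real.sqrt (2 * max y δ))|
          ≤ |2 * r * (x - y)| + |c * (Real.sqrt (2 * max x δ) - Real.sqrt (2 * max y δ))| :=
            abs_sub _ _
        _ ≤ 2 * r * |x - y| + |c| * (|x - y| / s) := by rw [h2]; linarith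
    calc |2 * r * (x - y) - c * (Real.sqrt (2 * max x δ) - Real.sqrt (2 * max y δ))| / (α * L)
        ≤ (2 * r * |x - y| + |c| * (|x - y| / s)) / (α * L) :=
          div_le_div_of_nonneg_right h1 hA.le
      _ = Kr * |x - y| := by rw [hKr]; field_simp
  -- continuity in t
  have hcont : ∀ x, Continuous fun t => F t x := by
    intro x; simp only [hF]; fun_prop
  -- bound at 0
  set B : ℝ := (|c| * s + z10 * (D0 * z20 + ρ)) / (α * L) with hB
  clear_value B
  have hz10' : 0 ≤ z10 * (D0 * z20 + ρ) := by nlinarith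
  have hB0 : 0 ≤ B := by
    rw [hB]
    apply div_nonneg _ hA.le
    have := mul_nonneg (abs_nonneg c) hs0.le
    linarith
  have hBle : ∀ t, |F t 0| ≤ B := by
    intro t
    have hmax0 : max (0:ℝ) δ = δ := max_eq_right hδ0.le
    have hFt0 : F t 0 = (-(c * s) + z10 * (D0 * z20 + ρ * Real.cos t)) / (α * L) := by
      simp only [hF, hmax0, ← hsdef]; ring
    rw [hFt0, abs_div, abs_of_pos hA, hB]
    apply div_le_div_of_nonneg_right _ hA.le
    have hrc1 : ρ * Real.cos t ≤ ρ := by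
      nlinarith [mul_nonneg hρ0 (sub_nonneg.2 (Real.cos_le_one t))]
    have hrc2 : -ρ ≤ ρ * Real.cos t := by
      nlinarith [mul_nonneg hρ0 (by linarith [Real.neg_one_le_cos t] : 0 ≤ Real.cos t + 1)]
    have hg1 : |z10 * (D0 * z20 + ρ * Real.cos t)| ≤ z10 * (D0 * z20 + ρ) := by
      rw [abs_le]
      constructor
      · nlinarith [mul_le_mul_of_nonneg_left (by linarith : -(D0 * z20 + ρ) ≤ D0 * z20 + ρ * Real.cos t) hz10.le]
      · exact mul_le_mul_of_nonneg_left (by linarith) hz10.le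
    have hcs1 : c * s ≤ |c| * s := mul_le_mul_of_nonneg_right (le_abs_self c) hs0.le
    have hcs2 : -(|c| * s) ≤ c * s := by
      have := mul_le_mul_of_nonneg_right (neg_abs_le c) hs0.le
      linarith
    obtain ⟨hg1a, hg1b⟩ := abs_le.1 hg1
    rw [abs_le]
    constructor <;> linarith
  obtain ⟨u, hu0eq, hu⟩ := global_ode F K hlip hcont B hB0 hBle u0
  -- barrier
  have hFb : ∀ t, 0 ≤ t → 0 < F t b := by
    intro t _
    have hmaxb : max b δ = b := max_eq_left hδb.le
    have h2ε : Real.sqrt (2 * ε) = gmin / (|c| + 1) := by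
      rw [hε, show 2 * (gmin^2 / (2 * (|c| + 1)^2)) = (gmin / (|c| + 1))^2 by
        field_simp]
      exact Real.sqrt_sq (by positivity)
    have hsb : Real.sqrt (2 * b) ≤ gmin / (|c| + 1) := by
      rw [← h2ε]; exact Real.sqrt_le_sqrt (by linarith)
    have hcsb : c * Real.sqrt (2 * b) ≤ |c| * (gmin / (|c| + 1)) := by
      calc c * Real.sqrt (2 * b) ≤ |c| * Real.sqrt (2 * b) :=
            mul_le_mul_of_nonneg_right (le_abs_self c) (Real.sqrt_nonneg _)
        _ ≤ |c| * (gmin / (|c| + 1)) := mul_le_mul_of_nonneg_left hsb (abs_nonneg c)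
    have hlt : |c| * (gmin / (|c| + 1)) < gmin := by
      rw [mul_div_assoc', div_lt_iff₀ (by positivity : (0:ℝ) < |c| + 1)]
      nlinarith [abs_nonneg c]
    have hrc2 : -ρ ≤ ρ * Real.cos t := by
      nlinarith [mul_nonneg hρ0 (by linarith [Real.neg_one_le_cos t] : 0 ≤ Real.cos t + 1)]
    have hgt : gmin ≤ z10 * (D0 * z20 + ρ * Real.cos t) := by
      rw [hgmin]
      exact mul_le_mul_of_nonneg_left (by linarith) hz10.le
    simp only [hF, hmaxb]
    apply div_pos _ hA
    have h2rb : 0 < 2 * r * b := mul_pos (by positivity) hb0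
    linarith
  have hbar : ∀ t, 0 ≤ t → b < u t := by
    apply barrier F u hu b _ hFb
    rw [hu0eq]; exact hbu0
  refine ⟨fun t => Real.sqrt (2 * u t) - z20, ?_, ?_⟩
  · show Real.sqrt (2 * u 0) - z20 = ψ0
    rw [hu0eq, hu0, show 2 * ((ψ0 + z20)^2 / 2) = (ψ0 + z20)^2 by ring,
      Real.sqrt_sq hψz.le]
    ring
  · intro τ hτ
    have hbu : b < u τ := hbar τ hτ
    have huτ : 0 < u τ := lt_trans hb0 hbu
    have hφ0 : 0 < Real.sqrt (2 * u τ) := Real.sqrt_pos.2 (by linarith)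
    have hφ2 : Real.sqrt (2 * u τ)^2 = 2 * u τ := Real.sq_sqrt (by linarith)
    constructor
    · show -z20 < Real.sqrt (2 * u τ) - z20
      linarith
    · show HasDerivAt (fun t => Real.sqrt (2 * u t) - z20)
        ((r * (Real.sqrt (2 * u τ) - z20) ^ 2
            + (r * z20 - w1 - D0 * z10) * (Real.sqrt (2 * u τ) - z20)
            - z20 * w1 + z10 * ρ * Real.cos τ) /
          (α * L * (Real.sqrt (2 * u τ) - z20 + z20))) τ
      have hmax : max (u τ) δ = u τ := max_eq_left (by linarith : δ ≤ u τ)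
      have hder : HasDerivAt (fun t => Real.sqrt (2 * u t) - z20)
          ((1 / (2 * Real.sqrt (2 * u τ))) * (2 * F τ (u τ))) τ := by
        have hin : HasDerivAt (fun t => 2 * u t) (2 * F τ (u τ)) τ := (hu τ hτ).const_mul 2
        have hsq : HasDerivAt Real.sqrt (1 / (2 * Real.sqrt (2 * u τ))) (2 * u τ) :=
          Real.hasDerivAt_sqrt (by linarith)
        exact (hsq.comp τ hin).sub_const z20
      have heq : (1 / (2 * Real.sqrt (2 * u τ))) * (2 * F τ (u τ)) =
          (r * (Real.sqrt (2 * u τ) - z20) ^ 2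
            + (r * z20 - w1 - D0 * z10) * (Real.sqrt (2 * u τ) - z20)
            - z20 * w1 + z10 * ρ * Real.cos τ) /
          (α * L * (Real.sqrt (2 * u τ) - z20 + z20)) := by
        simp only [hF, hmax]
        generalize hφg : Real.sqrt (2 * u τ) = φ
        rw [hφg] at hφ0 hφ2
        have huφ : u τ = φ^2/2 := by linarith
        rw [huφ, hc]
        rw [show φ - z20 + z20 = φ by ring]
        field_simp
        ring
      rw [← heq]
      exact hder
end
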